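/- arXiv:1010.0441 — 11 statements merged into one kernel-verified Lean document; each statement's English description precedes it below -/
import Mathlib

section
/- If f : X → Z is a cliquish map from a topological space X to a metric space (Z,d), then the set of points of continuity of f is residual in X (i.e., its complement is meager). -/
open Set Topology

def Cliquish {X Z : Type*} [TopologicalSpace X] [MetricSpace Z] (f : X → Z) : Prop :=
  ∀ ε : ℝ, 0 < ε → ∀ U : Set X, IsOpen U → U.Nonempty →
    ∃ O : Set X, IsOpen O ∧ O.Nonempty ∧ O ⊆ U ∧
      ∀ x ∈ O, ∀ y ∈ O, dist (f x) (f y) < ε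

theorem cliquish_continuityPoints_residual {X Z : Type*} [TopologicalSpace X] [MetricSpace Z]
    (f : X → Z) (hf : Cliquish f) : {x : X | ContinuousAt f x} ∈ residual X := by
  set W : ℝ → Set X := fun ε =>
    ⋃₀ {O : Set X | IsOpen O ∧ ∀ x ∈ O, ∀ y ∈ O, dist (f x) (f y) < ε} with hW
  have hWopen : ∀ ε, IsOpen (W ε) := fun ε =>
    isOpen_sUnion fun O hO => hO.1
  have hWdense : ∀ ε : ℝ, 0 < ε → Dense (W ε) := by
    intro ε hε
    rw [dense_iff_inter_open]
    intro U hU hUne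
    obtain ⟨O, hOopen, hOne, hOU, hOsmall⟩ := hf ε hε U hU hUne
    obtain ⟨x, hx⟩ := hOne
    exact ⟨x, hOU hx, O, ⟨hOopen, hOsmall⟩, hx⟩
  have key : (⋂ n : ℕ, W (1 / (n + 1))) ⊆ {x : X | ContinuousAt f x} := by
    intro x hx
    rw [mem_iInter] at hx
    rw [mem_setOf_eq, Metric.continuousAt_iff']
    intro ε hε
    obtain ⟨n, hn⟩ := exists_nat_one_div_lt hε
    obtain ⟨O, ⟨hOopen, hOsmall⟩, hxO⟩ := hx n
    filter_upwards [hOopen.mem_nhds hxO] with y hy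
    exact lt_trans (hOsmall y hy x hxO) hn
  apply Filter.mem_of_superset _ key
  apply countable_iInter_mem.mpr
  intro n
  exact residual_of_dense_open (hWopen _) (hWdense _ (by positivity))
end

section
/- Let Y be a topological space, y ∈ Y, and let N be a collection of subsets of Y such that: (i) for every neighborhood U of y there is a finite subcollection F ⊆ N with nonempty interior of ⋂F and ⋂F ⊆ U; and (ii) the closure of the set A = {z ∈ Y : the family {N ∈ N : z ∉ N} is countable} is a neighborhood of y. Then Player I has a winning strategy in the point-picking game G(A, y), where A is the collection of somewhere dense subsets of Y. -/
open Set Topology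

/-- `σ` is a winning strategy for Player I in the point-picking game `G(L, y)`:
Player I's moves always belong to `L`, and for every play of Player II compatible
with `σ`, the point `y` is in the closure of the set of picked points. -/
def WinningStratI {Y : Type*} [TopologicalSpace Y] (L : Set (Set Y)) (y : Y)
    (σ : List Y → Set Y) : Prop :=
  (∀ s : List Y, σ s ∈ L) ∧
  ∀ p : ℕ → Y, (∀ n : ℕ, p n ∈ σ (List.ofFn fun i : Fin n => p i.1)) →
    y ∈ closure (Set.range p)

def PlayerIWins {Y : Type*} [TopologicalSpace Y] (L : Set (Set Y)) (y : Y) : Prop :=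
  ∃ σ : List Y → Set Y, WinningStratI L y σ

section Aux

variable {Y : Type*} [TopologicalSpace Y]

/-- The family of "bad" sets of `z`: members of `𝒩` not containing `z`. -/
def Bad' (𝒩 : Set (Set Y)) (z : Y) : Set (Set Y) := {N | N ∈ 𝒩 ∧ z ∉ N}

open scoped Classical in
noncomputable def enumBad (𝒩 : Set (Set Y)) (z : Y) : ℕ → Set Y :=
  if h : (Bad' 𝒩 z).Countable ∧ (Bad' 𝒩 z).Nonempty then
    Classical.choose (Set.Countable.exists_eq_range h.1 h.2)
  else fun _ => Set.univ

omit [TopologicalSpace Y] in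
lemma enumBad_spec {𝒩 : Set (Set Y)} {z : Y} (hc : (Bad' 𝒩 z).Countable)
    {M : Set Y} (hM : M ∈ Bad' 𝒩 z) : ∃ j, enumBad 𝒩 z j = M := by
  have h : (Bad' 𝒩 z).Countable ∧ (Bad' 𝒩 z).Nonempty := ⟨hc, ⟨M, hM⟩⟩
  unfold enumBad
  rw [dif_pos h]
  have hs := Classical.choose_spec (Set.Countable.exists_eq_range h.1 h.2)
  rw [hs] at hM
  exact hM

lemma le_foldr_max (l : List ℕ) (a : ℕ) (h : a ∈ l) : a ≤ l.foldr max 0 := by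
  induction l with
  | nil => simp at h
  | cons b l ih =>
    simp only [List.foldr]
    rcases List.mem_cons.1 h with rfl | h
    · exact le_max_left _ _
    · exact le_trans (ih h) (le_max_right _ _)

end Aux

theorem playerI_wins_somewhereDense {Y : Type*} [TopologicalSpace Y] (y : Y)
    (𝒩 : Set (Set Y))
    (h1 : ∀ U ∈ nhds y, ∃ F : Set (Set Y), F ⊆ 𝒩 ∧ F.Finite ∧
      (interior (⋂₀ F)).Nonempty ∧ ⋂₀ F ⊆ U)
    (h2 : closure {z : Y | {N : Set Y | N ∈ 𝒩 ∧ z ∉ N}.Countable} ∈ nhds y) :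
    PlayerIWins {S : Set Y | (interior (closure S)).Nonempty} y := by
  classical
  set D : Set Y := {z : Y | (Bad' 𝒩 z).Countable} with hD
  have h2' : closure D ∈ nhds y := h2
  set G : List Y → Set (Set Y) := fun s =>
    (fun q : ℕ × ℕ => enumBad 𝒩 (s.getD q.1 y) q.2) ''
      {q | q ∈ (Denumerable.ofNat (List (ℕ × ℕ)) (Nat.unpair s.length).1)} with hG
  set σ : List Y → Set Y := fun s =>
    if (interior (closure (D ∩ ⋂₀ G s))).Nonempty then D ∩ ⋂₀ G s else D with hσ
  have hyD : y ∈ interior (closure D) := mem_interior_iff_mem_nhds.2 h2'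
  have hσD : ∀ s, σ s ⊆ D := by
    intro s
    simp only [hσ]
    split
    · exact inter_subset_left
    · exact le_rfl
  refine ⟨σ, ?_, ?_⟩
  · intro s
    simp only [hσ, mem_setOf_eq]
    split
    · assumption
    · exact ⟨y, hyD⟩
  · intro p hp
    have hpD : ∀ n, p n ∈ D := fun n => hσD _ (hp n)
    rw [mem_closure_iff]
    intro U hU hyU
    obtain ⟨F, hF𝒩, hFfin, ⟨x, hx⟩, hFU⟩ :=
      h1 (U ∩ interior (closure D))
        (Filter.inter_mem (hU.mem_nhds hyU) (isOpen_interior.mem_nhds hyD))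
    set F' : Set (Set Y) := F ∩ ⋃ m, Bad' 𝒩 (p m) with hF'def
    have hF'fin : F'.Finite := hFfin.subset inter_subset_left
    have key : ∀ M, M ∈ F' → ∃ q : ℕ × ℕ, enumBad 𝒩 (p q.1) q.2 = M := by
      rintro M ⟨hMF, hMT⟩
      obtain ⟨m, hm⟩ := mem_iUnion.1 hMT
      obtain ⟨j, hj⟩ := enumBad_spec (hpD m) hm
      exact ⟨(m, j), hj⟩
    set φ : Set Y → ℕ × ℕ :=
      fun M => if h : M ∈ F' then Classical.choose (key M h) else (0, 0) with hφ
    have hφspec : ∀ M (h : M ∈ F'), enumBad 𝒩 (p (φ M).1) (φ M).2 = M := by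
      intro M h
      simp only [hφ, dif_pos h]
      exact Classical.choose_spec (key M h)
    set L0 : List (ℕ × ℕ) := hF'fin.toFinset.toList.map φ with hL0
    set t : ℕ := (L0.map Prod.fst).foldr max 0 + 1 with ht
    set n : ℕ := Nat.pair (Encodable.encode L0) t with hn
    set s : List Y := List.ofFn (fun i : Fin n => p i.1) with hs
    have hlen : s.length = n := by simp [hs]
    have hbound : ∀ q ∈ L0, q.1 < n := by
      intro q hq
      have h1' : q.1 ≤ (L0.map Prod.fst).foldr max 0 :=
        le_foldr_max _ _ (List.mem_map_of_mem hq)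
      have h2'' : t ≤ n := Nat.right_le_pair _ _
      omega
    have hsget : ∀ q ∈ L0, s.getD q.1 y = p q.1 := by
      intro q hq
      have hlt : q.1 < s.length := by rw [hlen]; exact hbound q hq
      rw [List.getD_eq_getElem _ _ hlt]
      simp [hs]
    have hGs : G s = F' := by
      have hdec : {q : ℕ × ℕ | q ∈ (Denumerable.ofNat (List (ℕ × ℕ))
          (Nat.unpair s.length).1)} = {q | q ∈ L0} := by
        rw [hlen, hn, Nat.unpair_pair]
        simp
      simp only [hG, hdec]
      ext M
      constructor
      · rintro ⟨q, hq, rfl⟩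
        simp only [mem_setOf_eq, hL0, List.mem_map] at hq
        obtain ⟨M', hM', rfl⟩ := hq
        have hM'F : M' ∈ F' := (Set.Finite.mem_toFinset hF'fin).1
          (Finset.mem_toList.1 hM')
        show enumBad 𝒩 (s.getD (φ M').1 y) (φ M').2 ∈ F'
        rw [hsget _ (by
          simp only [hL0, List.mem_map]
          exact ⟨M', hM', rfl⟩)]
        rw [hφspec M' hM'F]
        exact hM'F
      · intro hM
        refine ⟨φ M, ?_, ?_⟩
        · simp only [mem_setOf_eq, hL0, List.mem_map]
          exact ⟨M, Finset.mem_toList.2 ((Set.Finite.mem_toFinset hF'fin).2 hM), rfl⟩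
        · show enumBad 𝒩 (s.getD (φ M).1 y) (φ M).2 = M
          rw [hsget (φ M) (by
            simp only [hL0, List.mem_map]
            exact ⟨M, Finset.mem_toList.2 ((Set.Finite.mem_toFinset hF'fin).2 hM), rfl⟩)]
          exact hφspec M hM
    have hW : interior (⋂₀ F) ⊆ closure (D ∩ ⋂₀ G s) := by
      intro w hw
      rw [mem_closure_iff]
      intro O hO hwO
      have hwD : w ∈ closure D :=
        interior_subset ((hFU (interior_subset hw)).2)
      rw [mem_closure_iff] at hwD
      obtain ⟨d, ⟨hdO, hdW⟩, hdD⟩ :=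
        hwD (O ∩ interior (⋂₀ F)) (hO.inter isOpen_interior) ⟨hwO, hw⟩
      refine ⟨d, hdO, hdD, ?_⟩
      rw [hGs]
      intro M hM
      exact interior_subset hdW M hM.1
    have hcond : (interior (closure (D ∩ ⋂₀ G s))).Nonempty :=
      ⟨x, interior_maximal hW isOpen_interior hx⟩
    have hpn : p n ∈ D ∩ ⋂₀ G s := by
      have : p n ∈ σ s := hp n
      rw [hσ] at this
      simpa only [if_pos hcond] using this
    refine ⟨p n, ?_, ⟨n, rfl⟩⟩
    have hz : p n ∈ ⋂₀ F := by
      intro N hN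
      by_contra hzN
      have hNF' : N ∈ F' := ⟨hN, mem_iUnion.2 ⟨n, hF𝒩 hN, hzN⟩⟩
      rw [← hGs] at hNF'
      exact hzN (hpn.2 N hNF')
    exact (hFU hz).1
end

section
/- For every uncountable cardinal κ and every y ∈ 2^κ, Player I has a winning strategy in the game G(A, y) on 2^κ, where A is the collection of somewhere dense subsets of 2^κ. (Consequently the games G(O,y) and G(A,y) are genuinely different.) -/
open Set Topology

theorem playerI_wins_somewhereDense_cantorCube {κ : Type*} [Uncountable κ]
    (y : κ → Bool) :
    PlayerIWins {S : Set (κ → Bool) | (interior (closure S)).Nonempty} y := by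
  classical
  -- difference set
  set D : (κ → Bool) → Set κ := fun z => {i | z i ≠ y i} with hD
  -- strategy: pick points with finite difference from y, agreeing with y on the
  -- (finite) difference sets of all previous moves
  refine ⟨fun s => {z | (D z).Finite ∧
      ∀ w ∈ s, (D w).Finite → ∀ i, w i ≠ y i → z i = y i}, ?_, ?_⟩
  · intro s
    set E : Set κ := ⋃ w ∈ {w | w ∈ s ∧ (D w).Finite}, D w with hE
    have hEfin : E.Finite := by
      refine Set.Finite.biUnion ?_ (fun w hw => hw.2)
      exact s.finite_toSet.subset (fun w hw => hw.1)
    set U : Set (κ → Bool) := ⋂ i ∈ E, {z | z i = y i} with hU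
    have hUopen : IsOpen U := by
      refine hEfin.isOpen_biInter (fun i _ => ?_)
      have : IsOpen ((fun z : κ → Bool => z i) ⁻¹' {y i}) :=
        (continuous_apply i).isOpen_preimage _ (isOpen_discrete _)
      exact this
    have hyU : y ∈ U := by
      simp [hU]
    have hsub : U ⊆ closure {z | (D z).Finite ∧
        ∀ w ∈ s, (D w).Finite → ∀ i, w i ≠ y i → z i = y i} := by
      intro u hu
      rw [mem_closure_iff_nhds]
      intro t ht
      rw [nhds_pi] at ht
      have ht' : t ∈ Filter.pi fun i => pure (u i) := by
        simpa [nhds_discrete] using ht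
      obtain ⟨I, hIfin, t', ht't, hsubt⟩ := Filter.mem_pi.mp ht'
      refine ⟨fun i => if i ∈ I then u i else y i, hsubt ?_, ?_, ?_⟩
      · intro i hi
        simpa [hi] using ht't i
      · refine hIfin.subset (fun i hi => ?_)
        by_contra h
        simp [hD, h] at hi
      · intro w hw hwfin i hwi
        have hiE : i ∈ E := by
          exact Set.mem_biUnion ⟨hw, hwfin⟩ hwi
        have : u i = y i := by
          have := Set.mem_iInter₂.mp hu i hiE
          exact this
        by_cases h : i ∈ I <;> simp [h, this]
    exact ⟨y, interior_maximal hsub hUopen hyU⟩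
  · intro p hp
    -- each move has finite difference set
    have hfin : ∀ n, (D (p n)).Finite := fun n => (hp n).1
    -- later moves agree with y on earlier difference sets
    have hdisj : ∀ k n : ℕ, k < n → ∀ i, p k i ≠ y i → p n i = y i := by
      intro k n hkn i hi
      exact (hp n).2 (p k) (by
        rw [List.mem_ofFn]
        exact ⟨⟨k, hkn⟩, rfl⟩) (hfin k) i hi
    rw [mem_closure_iff_nhds]
    intro t ht
    rw [nhds_pi] at ht
    have ht' : t ∈ Filter.pi fun i => pure (y i) := by
      simpa [nhds_discrete] using ht
    obtain ⟨I, hIfin, t', ht't, hsubt⟩ := Filter.mem_pi.mp ht'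
    -- the set of stages touching I is finite
    set S : Set ℕ := {n | ∃ i ∈ I, p n i ≠ y i} with hS
    have hSfin : S.Finite := by
      have hne : Nonempty κ := inferInstance
      set g : ℕ → κ := fun n => if h : ∃ i ∈ I, p n i ≠ y i then h.choose
        else Classical.arbitrary κ with hg
      have hgspec : ∀ n ∈ S, g n ∈ I ∧ p n (g n) ≠ y (g n) := by
        intro n hn
        have hx : ∃ i ∈ I, p n i ≠ y i := hn
        simp only [hg, dif_pos hx]
        exact hx.choose_spec
      have hinj : Set.InjOn g S := by
        intro a ha b hb hab
        by_contra hne'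
        rcases Nat.lt_or_ge a b with h | h
        · exact (hgspec b hb).2 (hdisj a b h _ ((hab ▸ (hgspec a ha).2)))
        · have h' : b < a := lt_of_le_of_ne h (Ne.symm hne')
          exact (hgspec a ha).2 (hdisj b a h' _ ((hab ▸ (hgspec b hb).2)))
      refine Set.Finite.of_finite_image (hIfin.subset ?_) hinj
      rintro _ ⟨n, hn, rfl⟩
      exact (hgspec n hn).1
    obtain ⟨n, hn⟩ := hSfin.infinite_compl.nonempty
    refine ⟨p n, hsubt (fun i hi => ?_), Set.mem_range_self n⟩
    have : p n i = y i := by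
      by_contra h
      exact hn ⟨i, hi, h⟩
    rw [this]
    simpa using ht't i
end

section
/- Suppose Player I has a winning strategy τ in the game G(L, y) on Y. Then for every neighborhood V of y in Y, Player I has a winning strategy σ in G(L, y) such that σ(s) ⊆ V for every finite sequence s of points of Y. -/
open Set Topology

section Aux
attribute [local instance] Classical.propDecidable
variable {Y : Type*} [TopologicalSpace Y]

/-- One step of the "chase": if `τ t` is not contained in `U`, append a point of `τ t \ U`. -/
noncomputable def pstep (τ : List Y → Set Y) (U : Set Y) (t : List Y) : List Y :=
  if h : (τ t \ U).Nonempty then t ++ [h.choose] else t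

/-- The chase starting from `t` eventually reaches a position where `τ` prescribes
a subset of `U`. -/
def Term (τ : List Y → Set Y) (U : Set Y) (t : List Y) : Prop :=
  ∃ n, τ ((pstep τ U)^[n] t) ⊆ U

noncomputable def pext (τ : List Y → Set Y) (U : Set Y) (t : List Y) : List Y :=
  if h : Term τ U t then (pstep τ U)^[Nat.find h] t
  else if h0 : Term τ U [] then (pstep τ U)^[Nat.find h0] []
  else []

noncomputable def pF (τ : List Y → Set Y) (U : Set Y) : List Y → List Y
  | [] => pext τ U []
  | a :: r => pext τ U (pF τ U r ++ [a])

/-- `t` is a legal partial play against `τ`. -/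
def Comp (τ : List Y → Set Y) (t : List Y) : Prop :=
  ∀ i (h : i < t.length), t[i] ∈ τ (t.take i)

variable {τ : List Y → Set Y} {U : Set Y}

lemma prefix_pstep (t : List Y) : t <+: pstep τ U t := by
  unfold pstep; split
  · exact ⟨_, rfl⟩
  · exact List.prefix_rfl

lemma prefix_iterate_pstep (t : List Y) {m n : ℕ} (h : m ≤ n) :
    (pstep τ U)^[m] t <+: (pstep τ U)^[n] t := by
  induction n with
  | zero => simpa [Nat.le_zero.mp h]
  | succ n ih =>
    rcases Nat.lt_or_ge m (n+1) with h' | h'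
    · exact (ih (Nat.lt_succ_iff.mp h')).trans
        (by rw [Function.iterate_succ_apply']; exact prefix_pstep _)
    · have : m = n + 1 := le_antisymm h h'
      simp [this]

lemma mem_pstep {t : List Y} {a : Y} (ha : a ∈ pstep τ U t) : a ∈ t ∨ a ∉ U := by
  unfold pstep at ha; split at ha
  · rcases List.mem_append.mp ha with h | h
    · exact Or.inl h
    · rename_i hne
      simp only [List.mem_singleton] at h
      subst h; exact Or.inr hne.choose_spec.2
  · exact Or.inl ha

lemma mem_iterate_pstep {t : List Y} {a : Y} {n : ℕ}
    (ha : a ∈ (pstep τ U)^[n] t) : a ∈ t ∨ a ∉ U := by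
  induction n generalizing a with
  | zero => exact Or.inl ha
  | succ n ih =>
    rw [Function.iterate_succ_apply'] at ha
    rcases mem_pstep ha with h | h
    · exact ih h
    · exact Or.inr h

lemma mem_pext {t : List Y} {a : Y} (ha : a ∈ pext τ U t) : a ∈ t ∨ a ∉ U := by
  unfold pext at ha
  split at ha
  · exact mem_iterate_pstep ha
  · split at ha
    · rcases mem_iterate_pstep ha with h | h
      · simp at h
      · exact Or.inr h
    · simp at ha

lemma comp_concat (h : Comp τ t) {x : Y} (hx : x ∈ τ t) : Comp τ (t ++ [x]) := by
  intro i hi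
  simp only [List.length_append, List.length_singleton] at hi
  rcases Nat.lt_or_ge i t.length with h' | h'
  · rw [List.getElem_append_left h', List.take_append_of_le_length h'.le]
    exact h i h'
  · have : i = t.length := by omega
    subst this
    rw [List.take_append_of_le_length le_rfl, List.take_length]
    simpa using hx

lemma comp_pstep (h : Comp τ t) : Comp τ (pstep τ U t) := by
  unfold pstep; split
  · rename_i hne; exact comp_concat h hne.choose_spec.1
  · exact h

lemma comp_iterate_pstep (h : Comp τ t) (n : ℕ) : Comp τ ((pstep τ U)^[n] t) := by
  induction n with
  | zero => exact h
  | succ n ih => rw [Function.iterate_succ_apply']; exact comp_pstep ih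

lemma comp_nil : Comp τ ([] : List Y) := by intro i hi; simp at hi

lemma comp_pext (h : Comp τ t) : Comp τ (pext τ U t) := by
  unfold pext
  split
  · exact comp_iterate_pstep h _
  · split
    · exact comp_iterate_pstep comp_nil _
    · exact comp_nil

lemma length_iterate_pstep (ht : ¬ Term τ U t) (n : ℕ) :
    ((pstep τ U)^[n] t).length = t.length + n := by
  induction n with
  | zero => rfl
  | succ n ih =>
    rw [Function.iterate_succ_apply']
    have hne : (τ ((pstep τ U)^[n] t) \ U).Nonempty := by
      rw [Set.diff_nonempty]
      exact fun hc => ht ⟨n, hc⟩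
    rw [pstep, dif_pos hne]
    simp [ih]; omega

end Aux

section Aux2
attribute [local instance] Classical.propDecidable
variable {Y : Type*} [TopologicalSpace Y] {τ : List Y → Set Y} {U : Set Y} {y : Y}

lemma key_escape
    (hτ2 : ∀ p : ℕ → Y, (∀ n : ℕ, p n ∈ τ (List.ofFn fun i : Fin n => p i.1)) →
      y ∈ closure (Set.range p))
    (hU : IsOpen U) (hyU : y ∈ U)
    {t : List Y} (hc : Comp τ t) (ht : ¬ Term τ U t) :
    y ∈ closure {a | a ∈ t} := by
  have hlen : ∀ n, ((pstep τ U)^[n] t).length = t.length + n := length_iterate_pstep ht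
  have hklt : ∀ k m, k < m → k < ((pstep τ U)^[m] t).length := by
    intro k m h; rw [hlen]; omega
  set q : ℕ → Y := fun k => ((pstep τ U)^[k+1] t)[k]'(hklt k (k+1) (by omega)) with hq
  have hqm : ∀ k m (h : k < m), q k = ((pstep τ U)^[m] t)[k]'(hklt k m h) := by
    intro k m h
    rcases le_or_gt m (k+1) with h' | h'
    · have : m = k + 1 := by omega
      subst this; rfl
    · exact (prefix_iterate_pstep t h'.le).getElem (hklt k (k+1) (by omega))
  have hofFn : ∀ k, (List.ofFn fun i : Fin k => q i.1) = ((pstep τ U)^[k+1] t).take k := by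
    intro k
    apply List.ext_getElem
    · simp only [List.length_ofFn, List.length_take, hlen]; omega
    · intro n h₁ h₂
      rw [List.getElem_ofFn, List.getElem_take]
      exact hqm n (k+1) (by simp only [List.length_ofFn] at h₁; omega)
  have hcomp : ∀ k, q k ∈ τ (List.ofFn fun i : Fin k => q i.1) := by
    intro k
    rw [hofFn k]
    have := (comp_iterate_pstep hc (k+1) (U := U)) k (hklt k (k+1) (by omega))
    exact this
  have hy := hτ2 q hcomp
  have hsub : Set.range q ⊆ {a | a ∈ t} ∪ Uᶜ := by
    rintro _ ⟨k, rfl⟩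
    rcases mem_iterate_pstep (List.getElem_mem (hklt k (k+1) (by omega))) with h | h
    · exact Or.inl h
    · exact Or.inr h
  have := closure_mono hsub hy
  rw [closure_union] at this
  rcases this with h | h
  · exact h
  · exact absurd (hU.isClosed_compl.closure_eq ▸ h) (by simpa using hyU)

end Aux2

section Aux3
attribute [local instance] Classical.propDecidable
variable {Y : Type*} [TopologicalSpace Y] {τ : List Y → Set Y} {U : Set Y}

lemma pext_subset (h0 : Term τ U []) (t : List Y) : τ (pext τ U t) ⊆ U := by
  unfold pext
  split
  · rename_i h; exact Nat.find_spec h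
  · exact Nat.find_spec h0

lemma prefix_pext (h : Term τ U t) : t <+: pext τ U t := by
  unfold pext
  rw [dif_pos h]
  exact prefix_iterate_pstep t (Nat.zero_le _)

end Aux3


theorem winning_strategy_inside_nbhd {Y : Type*} [TopologicalSpace Y]
    (L : Set (Set Y)) (hL : ∀ S ∈ L, S.Nonempty) (y : Y)
    (τ : List Y → Set Y) (hτ : WinningStratI L y τ)
    (V : Set Y) (hV : V ∈ nhds y) :
    ∃ σ : List Y → Set Y, WinningStratI L y σ ∧ ∀ s : List Y, σ s ⊆ V := by
  classical
  obtain ⟨U, hUV, hU, hyU⟩ := mem_nhds_iff.mp hV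
  obtain ⟨hτ1, hτ2⟩ := hτ
  have h0 : Term τ U [] := by
    by_contra h
    have := key_escape hτ2 hU hyU comp_nil h
    simp at this
  refine ⟨fun s => τ (pF τ U s.reverse), ⟨fun s => hτ1 _, ?_⟩, ?_⟩
  · -- winning
    intro p hp
    set w : ℕ → List Y := fun n => Nat.rec (pext τ U []) (fun n t => pext τ U (t ++ [p n])) n
      with hw
    have hwsucc : ∀ n, w (n+1) = pext τ U (w n ++ [p n]) := fun n => rfl
    have hFw : ∀ n, pF τ U (List.ofFn fun i : Fin n => p i.1).reverse = w n := by
      intro n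
      induction n with
      | zero => rfl
      | succ n ih =>
        rw [List.ofFn_succ']
        simp only [List.concat_eq_append, List.reverse_append, List.reverse_singleton,
          List.singleton_append, Fin.val_last, Fin.coe_castSucc]
        rw [pF, ih]
    have hpn : ∀ n, p n ∈ τ (w n) := fun n => hFw n ▸ hp n
    have hcw : ∀ n, Comp τ (w n) := by
      intro n
      induction n with
      | zero => exact comp_pext comp_nil
      | succ n ih => rw [hwsucc]; exact comp_pext (comp_concat ih (hpn n))
    have hmem : ∀ n a, a ∈ w n → (∃ i, a = p i) ∨ a ∉ U := by
      intro n
      induction n with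
      | zero =>
        intro a ha
        rcases mem_pext ha with h | h
        · simp at h
        · exact Or.inr h
      | succ n ih =>
        intro a ha
        rw [hwsucc] at ha
        rcases mem_pext ha with h | h
        · rcases List.mem_append.mp h with h | h
          · exact ih a h
          · exact Or.inl ⟨n, by simpa using h⟩
        · exact Or.inr h
    by_cases hall : ∀ n, Term τ U (w n ++ [p n])
    · -- Case 1: infinite virtual play against τ
      have hpre : ∀ n, w n ++ [p n] <+: w (n+1) := by
        intro n; rw [hwsucc]; exact prefix_pext (hall n)
      have hlenw : ∀ n, n ≤ (w n).length := by
        intro n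
        induction n with
        | zero => exact Nat.zero_le _
        | succ n ih =>
          have := (hpre n).length_le
          simp only [List.length_append, List.length_singleton] at this
          omega
      have hmono : ∀ m n, m ≤ n → w m <+: w n := by
        intro m n h
        induction n with
        | zero => simp_all
        | succ n ih =>
          rcases Nat.lt_or_ge m (n+1) with h' | h'
          · exact (ih (Nat.lt_succ_iff.mp h')).trans
              ((List.prefix_append _ _).trans (hpre n))
          · have : m = n + 1 := by omega
            simp [this]
      have hklt : ∀ k m, k < m → k < (w m).length := fun k m h => lt_of_lt_of_le h (hlenw m)
      set q : ℕ → Y := fun k => (w (k+1))[k]'(hklt k (k+1) (by omega)) with hq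
      have hqm : ∀ k m (h : k < m), q k = (w m)[k]'(hklt k m h) := by
        intro k m h
        rcases le_or_gt m (k+1) with h' | h'
        · have : m = k + 1 := by omega
          subst this; rfl
        · exact (hmono (k+1) m h'.le).getElem (hklt k (k+1) (by omega))
      have hofFn : ∀ k, (List.ofFn fun i : Fin k => q i.1) = (w (k+1)).take k := by
        intro k
        apply List.ext_getElem
        · simp only [List.length_ofFn, List.length_take]
          have := hlenw (k+1); omega
        · intro n h₁ h₂
          rw [List.getElem_ofFn, List.getElem_take]
          exact hqm n (k+1) (by simp only [List.length_ofFn] at h₁; omega)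
      have hcompq : ∀ k, q k ∈ τ (List.ofFn fun i : Fin k => q i.1) := by
        intro k
        rw [hofFn k]
        exact hcw (k+1) k (hklt k (k+1) (by omega))
      have hy := hτ2 q hcompq
      have hsub : Set.range q ⊆ Set.range p ∪ Uᶜ := by
        rintro _ ⟨k, rfl⟩
        rcases hmem (k+1) _ (List.getElem_mem (hklt k (k+1) (by omega))) with ⟨i, hi⟩ | h
        · exact Or.inl ⟨i, hi.symm⟩
        · exact Or.inr h
      have := closure_mono hsub hy
      rw [closure_union] at this
      rcases this with h | h
      · exact h
      · exact absurd (hU.isClosed_compl.closure_eq ▸ h) (by simpa using hyU)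
    · -- Case 2: the chase fails to terminate at some stage; II already lost
      push_neg at hall
      obtain ⟨n, hn⟩ := hall
      have hkey := key_escape hτ2 hU hyU (comp_concat (hcw n) (hpn n)) hn
      have hsub : {a | a ∈ w n ++ [p n]} ⊆ Set.range p ∪ Uᶜ := by
        intro a ha
        rcases List.mem_append.mp ha with h | h
        · rcases hmem n a h with ⟨i, hi⟩ | h'
          · exact Or.inl ⟨i, hi.symm⟩
          · exact Or.inr h'
        · exact Or.inl ⟨n, (List.mem_singleton.mp h).symm⟩
      have := closure_mono hsub hkey
      rw [closure_union] at this
      rcases this with h | h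
      · exact h
      · exact absurd (hU.isClosed_compl.closure_eq ▸ h) (by simpa using hyU)
  · -- σ s ⊆ V
    intro s
    refine subset_trans ?_ hUV
    show τ (pF τ U s.reverse) ⊆ U
    cases hrev : s.reverse with
    | nil => simp only [pF]; exact pext_subset h0 _
    | cons a r => simp only [pF]; exact pext_subset h0 _
end

section
/- Let X, Y be topological spaces, (Δ_x)_{x∈X} a family of subsets of Y × Y, and L a collection of nonempty subsets of Y such that for every y ∈ Y Player I has a winning strategy in the game G(L, y). Let R ⊆ X be a nonmeager (second category) subset such that Y is fragmented by Δ_x for each x ∈ R. Then for every nonempty open set V ⊆ Y there exist a nonempty open set U ⊆ X, a point y ∈ V, and a set L ∈ L with L ⊆ V, such that for every b ∈ L the set {x ∈ U : (b, y) ∈ Δ_x} is dense in U. -/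
open Set Topology

/-- `Y` is fragmented by `Δ ⊆ Y × Y`: every nonempty subspace has a nonempty
relatively open subset `U` with `U × U ⊆ Δ`. -/
def FragmentedBy {Y : Type*} [TopologicalSpace Y] (Δ : Set (Y × Y)) : Prop :=
  ∀ S : Set Y, S.Nonempty → ∃ O : Set Y, IsOpen O ∧ (S ∩ O).Nonempty ∧
    ∀ a ∈ S ∩ O, ∀ b ∈ S ∩ O, (a, b) ∈ Δ


/-! ### Auxiliary machinery -/

/-- Legality of a finite play against strategy `σ`. -/
def LegalPlay {Y : Type*} (σ : List Y → Set Y) (l : List Y) : Prop :=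
  ∀ j (hj : j < l.length), l[j] ∈ σ (l.take j)

lemma legalPlay_nil {Y : Type*} (σ : List Y → Set Y) : LegalPlay σ [] := by
  intro j hj; simp at hj

lemma legalPlay_append {Y : Type*} {σ : List Y → Set Y} {l : List Y}
    (h : LegalPlay σ l) {z : Y} (hz : z ∈ σ l) : LegalPlay σ (l ++ [z]) := by
  intro j hj
  rcases lt_or_eq_of_le (Nat.lt_succ_iff.1 (by simpa using hj)) with hlt | heq
  · rw [List.getElem_append_left hlt, List.take_append_of_le_length hlt.le]
    exact h j hlt
  · rw [List.getElem_concat_length heq]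
    rw [heq, List.take_left]
    exact hz

lemma limit_play {Y : Type*} (σ : List Y → Set Y) (l : ℕ → List Y)
    (hpre : ∀ m, l m <+: l (m+1)) (hleg : ∀ m, LegalPlay σ (l m))
    (hlen : ∀ M : ℕ, ∃ m, M ≤ (l m).length) :
    ∃ p : ℕ → Y, (∀ n, p n ∈ σ (List.ofFn fun i : Fin n => p i.1)) ∧
      ∀ n, ∃ m, p n ∈ l m := by
  classical
  have hmono : ∀ m m', m ≤ m' → l m <+: l m' := by
    intro m m' h
    induction m' with
    | zero => rw [Nat.le_zero.1 h]
    | succ k ih =>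
        rcases Nat.lt_succ_iff_lt_or_eq.1 (Nat.lt_succ_of_le h) with h' | h'
        · exact (ih (Nat.lt_succ_iff.1 h')).trans (hpre k)
        · rw [h']
  choose idx hidx using fun n => hlen (n+1)
  have hn' : ∀ n, n < (l (idx n)).length := fun n => (Nat.lt_succ_self n).trans_le (hidx n)
  set p : ℕ → Y := fun n => (l (idx n))[n]'(hn' n) with hp
  have agree : ∀ m n (hn : n < (l m).length), (l m)[n] = p n := by
    intro m n hn
    rcases le_total m (idx n) with h | h
    · exact (hmono m _ h).getElem hn
    · exact ((hmono _ m h).getElem (hn' n)).symm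
  have pref : ∀ n m, n ≤ (l m).length → (List.ofFn fun i : Fin n => p i.1) = (l m).take n := by
    intro n m hnm
    apply List.ext_getElem
    · simp [List.length_ofFn, List.length_take]
      omega
    · intro i h1 h2
      have hi : i < (l m).length := by
        simp [List.length_take] at h2
        exact h2.2
      rw [List.getElem_ofFn, List.getElem_take]
      exact (agree m i hi).symm
  refine ⟨p, ?_, ?_⟩
  · intro n
    have hmem := hleg (idx n) n (hn' n)
    rw [pref n (idx n) (le_of_lt (hn' n))]
    exact hmem
  · intro n
    exact ⟨idx n, by rw [hp]; exact List.getElem_mem _⟩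

lemma stuck_closure {Y : Type*} [TopologicalSpace Y] {L : Set (Set Y)} {V : Set Y}
    (hV : IsOpen V) {s : Y} (hs : s ∈ V) {σ : List Y → Set Y}
    (hσ : WinningStratI L s σ) {h : List Y} (hleg : LegalPlay σ h)
    (hstuck : ¬ ∃ e : List Y, (∀ z ∈ e, z ∉ V) ∧ LegalPlay σ (h ++ e) ∧ σ (h ++ e) ⊆ V) :
    s ∈ closure {z | z ∈ h ∧ z ∈ V} := by
  classical
  push_neg at hstuck
  have step : ∀ e : List Y, (∀ z ∈ e, z ∉ V) → LegalPlay σ (h ++ e) →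
      ∃ z, z ∈ σ (h ++ e) ∧ z ∉ V := by
    intro e he1 he2
    have := hstuck e he1 he2
    rw [Set.not_subset] at this
    exact this
  set T := {e : List Y // (∀ z ∈ e, z ∉ V) ∧ LegalPlay σ (h ++ e)} with hT
  have stepT : ∀ t : T, ∃ z, z ∈ σ (h ++ t.1) ∧ z ∉ V := fun t => step t.1 t.2.1 t.2.2
  choose zf hzf1 hzf2 using stepT
  let t₀ : T := ⟨[], ⟨by simp, by simpa using hleg⟩⟩
  let ext : T → T := fun t => ⟨t.1 ++ [zf t], by
      constructor
      · intro z hz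
        rcases List.mem_append.1 hz with hz | hz
        · exact t.2.1 z hz
        · rw [List.mem_singleton.1 hz]; exact hzf2 t
      · rw [← List.append_assoc]
        exact legalPlay_append t.2.2 (hzf1 t)⟩
  let g : ℕ → T := fun m => Nat.rec t₀ (fun _ t => ext t) m
  have hgS : ∀ m, (g (m+1)).1 = (g m).1 ++ [zf (g m)] := fun m => rfl
  have hglen : ∀ m, ((g m).1).length = m := by
    intro m
    induction m with
    | zero => rfl
    | succ k ih => rw [hgS, List.length_append, ih]; rfl
  set l : ℕ → List Y := fun m => h ++ (g m).1 with hl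
  have hpre : ∀ m, l m <+: l (m+1) := by
    intro m
    refine ⟨[zf (g m)], ?_⟩
    show (h ++ (g m).1) ++ [zf (g m)] = h ++ (g (m+1)).1
    rw [hgS, List.append_assoc]
  have hlegl : ∀ m, LegalPlay σ (l m) := fun m => (g m).2.2
  have hlen : ∀ M : ℕ, ∃ m, M ≤ (l m).length := by
    intro M
    exact ⟨M, by rw [hl]; simp only [List.length_append, hglen]; omega⟩
  obtain ⟨p, hp1, hp2⟩ := limit_play σ l hpre hlegl hlen
  have hwin := hσ.2 p hp1
  have hsub : Set.range p ⊆ {z | z ∈ h ∧ z ∈ V} ∪ Vᶜ := by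
    rintro z ⟨n, rfl⟩
    obtain ⟨m, hm⟩ := hp2 n
    rcases List.mem_append.1 (by rw [hl] at hm; exact hm) with hz | hz
    · by_cases hzV : p n ∈ V
      · exact Or.inl ⟨hz, hzV⟩
      · exact Or.inr hzV
    · exact Or.inr ((g m).2.1 _ hz)
  have := closure_mono hsub hwin
  rw [closure_union, hV.isClosed_compl.closure_eq] at this
  rcases this with h1 | h1
  · exact h1
  · exact absurd hs h1

lemma bm_meagre {X : Type*} [TopologicalSpace X] {A : Type*} (R : Set X) (a₀ : A)
    (f : A → Set X → A × Set X)
    (hf : ∀ a W, IsOpen W → W.Nonempty → IsOpen (f a W).2 ∧ (f a W).2.Nonempty ∧ (f a W).2 ⊆ W)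
    (hplays : ∀ (a : ℕ → A) (W W' : ℕ → Set X), a 0 = a₀ →
      (∀ n, IsOpen (W n)) → (∀ n, (W n).Nonempty) →
      (∀ n, f (a n) (W n) = (a (n+1), W' n)) →
      (∀ n, W (n+1) ⊆ W' n) → ∀ x ∈ R, ∃ n, x ∉ W' n) :
    IsMeagre R := by
  classical
  rcases isEmpty_or_nonempty X with hX | hX
  · have : R = ∅ := eq_empty_of_isEmpty R
    rw [IsMeagre, this, compl_empty]
    exact Filter.univ_mem
  -- families of opponent moves with pairwise disjoint responses
  set Fam : A × Set X → Set (Set (Set X)) := fun p =>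
    {F | (∀ W ∈ F, IsOpen W ∧ W.Nonempty ∧ W ⊆ p.2) ∧
      F.Pairwise fun W W' => Disjoint (f p.1 W).2 (f p.1 W').2} with hFam
  have zorn : ∀ p, ∃ M, M ∈ Fam p ∧ ∀ F ∈ Fam p, M ⊆ F → F = M := by
    intro p
    obtain ⟨m, hm⟩ := zorn_subset (Fam p) (fun c hc hchain => by
      refine ⟨⋃₀ c, ⟨?_, ?_⟩, fun s hs => subset_sUnion_of_mem hs⟩
      · rintro W ⟨F, hF, hWF⟩
        exact (hc hF).1 W hWF
      · intro W hW W' hW' hne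
        obtain ⟨F, hF, hWF⟩ := hW
        obtain ⟨F', hF', hWF'⟩ := hW'
        rcases hchain.total hF hF' with h | h
        · exact (hc hF').2 (h hWF) hWF' hne
        · exact (hc hF).2 hWF (h hWF') hne)
    exact ⟨m, hm.1, fun F hF hsub => (hm.2 hF hsub).antisymm hsub⟩
  choose M hMmem hMmax using zorn
  set children : A × Set X → Set (A × Set X) := fun p => {q | ∃ W ∈ M p, f p.1 W = q}
    with hchildren
  -- children are valid and inside parent
  have hchild_sub : ∀ p q, q ∈ children p → IsOpen q.2 ∧ q.2.Nonempty ∧ q.2 ⊆ p.2 := by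
    rintro p q ⟨W, hW, rfl⟩
    obtain ⟨hWo, hWne, hWsub⟩ := (hMmem p).1 W hW
    obtain ⟨h1, h2, h3⟩ := hf p.1 W hWo hWne
    exact ⟨h1, h2, h3.trans hWsub⟩
  -- density of children in the parent
  have hdense : ∀ p, IsOpen p.2 → ∀ N, IsOpen N → (N ∩ p.2).Nonempty →
      ∃ q ∈ children p, (N ∩ p.2 ∩ q.2).Nonempty := by
    intro p hpo N hN hNne
    by_contra hcon
    push_neg at hcon
    set W := N ∩ p.2 with hWdef
    have hWo : IsOpen W := hN.inter hpo
    have hWM : W ∉ M p := by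
      intro hWM
      have hq : f p.1 W ∈ children p := ⟨W, hWM, rfl⟩
      obtain ⟨_, hne, hsub⟩ := hf p.1 W hWo hNne
      obtain ⟨z, hz⟩ := hne
      have hemp : W ∩ (f p.1 W).2 = ∅ := by simpa using (hcon _ hq)
      have hzW : z ∈ W ∩ (f p.1 W).2 := ⟨hsub hz, hz⟩
      rw [hemp] at hzW
      exact hzW
    have hins : insert W (M p) ∈ Fam p := by
      constructor
      · rintro W' (rfl | hW')
        · exact ⟨hWo, hNne, inter_subset_right⟩
        · exact (hMmem p).1 W' hW'
      · have hdis : ∀ W' ∈ M p, Disjoint (f p.1 W).2 (f p.1 W').2 := by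
          intro W' hW'
          have hsub : (f p.1 W).2 ⊆ W := (hf p.1 W hWo hNne).2.2
          rw [disjoint_iff_inter_eq_empty]
          ext z; simp only [mem_inter_iff, mem_empty_iff_false, iff_false]
          rintro ⟨hz1, hz2⟩
          have hemp : W ∩ (f p.1 W').2 = ∅ := by simpa using hcon _ ⟨W', hW', rfl⟩
          have hzW : z ∈ W ∩ (f p.1 W').2 := ⟨hsub hz1, hz2⟩
          rw [hemp] at hzW
          exact hzW
        rw [Set.pairwise_insert]
        exact ⟨(hMmem p).2, fun W' hW' _ => ⟨hdis W' hW', (hdis W' hW').symm⟩⟩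
    have := hMmax p _ hins (subset_insert _ _)
    exact hWM (this ▸ mem_insert _ _)
  -- the levels
  set Lv : ℕ → Set (A × Set X) := fun n =>
    Nat.rec {(a₀, univ)} (fun _ s => ⋃ p ∈ s, children p) n with hLv
  have hLv0 : Lv 0 = {(a₀, univ)} := rfl
  have hLvS : ∀ n, Lv (n+1) = ⋃ p ∈ Lv n, children p := fun n => rfl
  -- validity
  have hvalid : ∀ n, ∀ p ∈ Lv n, IsOpen p.2 ∧ p.2.Nonempty := by
    intro n
    induction n with
    | zero => rintro p hp; rw [hLv0, mem_singleton_iff] at hp; subst hp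
              exact ⟨isOpen_univ, univ_nonempty⟩
    | succ n ih =>
        intro p hp
        rw [hLvS] at hp
        simp only [mem_iUnion] at hp
        obtain ⟨q, hq, hpq⟩ := hp
        exact ⟨(hchild_sub q p hpq).1, (hchild_sub q p hpq).2.1⟩
  -- pairwise disjointness at each level
  have hdisj : ∀ n, ∀ p ∈ Lv n, ∀ q ∈ Lv n, p ≠ q → Disjoint p.2 q.2 := by
    intro n
    induction n with
    | zero =>
        rintro p hp q hq hne
        rw [hLv0, mem_singleton_iff] at hp hq
        exact absurd (hp.trans hq.symm) hne
    | succ n ih =>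
        intro p hp q hq hne
        rw [hLvS] at hp hq
        simp only [mem_iUnion] at hp hq
        obtain ⟨p', hp', hpc⟩ := hp
        obtain ⟨q', hq', hqc⟩ := hq
        by_cases hpq : p' = q'
        · subst hpq
          obtain ⟨W, hW, hfW⟩ := hpc
          obtain ⟨W', hW', hfW'⟩ := hqc
          have hWne : W ≠ W' := by
            rintro rfl; exact hne (hfW ▸ hfW' ▸ rfl)
          have hd := (hMmem p').2 hW hW' hWne
          exact hfW ▸ hfW' ▸ hd
        · exact (ih p' hp' q' hq' hpq).mono (hchild_sub _ _ hpc).2.2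
            (hchild_sub _ _ hqc).2.2
  -- the open "surviving" sets
  set G : ℕ → Set X := fun n => ⋃ p ∈ Lv n, p.2 with hG
  have hG0 : G 0 = univ := by simp [hG, hLv0]
  -- density of G (n+1) in G n, localized
  have hGdense : ∀ n N, IsOpen N → (N ∩ G n).Nonempty → (N ∩ G (n+1)).Nonempty := by
    intro n N hN hne
    obtain ⟨z, hzN, hzG⟩ := hne
    simp only [hG, mem_iUnion] at hzG
    obtain ⟨p, hp, hzp⟩ := hzG
    obtain ⟨q, hq, w, hw1, hw2⟩ := hdense p (hvalid n p hp).1 N hN ⟨z, hzN, hzp⟩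
    refine ⟨w, hw1.1, ?_⟩
    simp only [hG, mem_iUnion]
    refine ⟨q, ?_, hw2⟩
    rw [hLvS]; simp only [mem_iUnion]; exact ⟨p, hp, hq⟩
  -- nowhere density of the differences
  have hnwd : ∀ n, IsNowhereDense (G n \ G (n+1)) := by
    intro n
    rw [IsNowhereDense]
    by_contra hcon
    obtain ⟨x, hx⟩ := nonempty_iff_ne_empty.2 hcon
    have hNo : IsOpen (interior (closure (G n \ G (n+1)))) := isOpen_interior
    have hsub : interior (closure (G n \ G (n+1))) ⊆ closure (G n \ G (n+1)) :=
      interior_subset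
    -- N meets G n
    have h1 : (interior (closure (G n \ G (n+1))) ∩ (G n \ G (n+1))).Nonempty := by
      have := hsub (mem_of_mem_of_subset hx (subset_refl _))
      exact (mem_closure_iff.1 this) _ hNo hx
    have h2 : (interior (closure (G n \ G (n+1))) ∩ G n).Nonempty :=
      h1.imp (fun z hz => ⟨hz.1, hz.2.1⟩)
    obtain ⟨w, hw1, hw2⟩ := hGdense n _ hNo h2
    -- w ∈ N ∩ G (n+1); N ∩ G(n+1) open nbhd of w ⊆ closure diff, meets diff
    have hw3 : w ∈ closure (G n \ G (n+1)) := hsub hw1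
    have hGo : IsOpen (G (n+1)) := by
      refine isOpen_biUnion fun p hp => (hvalid (n+1) p hp).1
    obtain ⟨v, hv1, hv2⟩ := (mem_closure_iff.1 hw3) _ (hNo.inter hGo) ⟨hw1, hw2⟩
    exact hv2.2 hv1.2
  -- main claim: points in all G n are not in R
  have hbranch : ∀ x, (∀ n, x ∈ G n) → x ∉ R := by
    intro x hx hxR
    -- unique position through x at each level, forming a branch
    have keyx : ∀ n p, p ∈ Lv n → x ∈ p.2 →
        ∃ W, IsOpen W ∧ W.Nonempty ∧ W ⊆ p.2 ∧
          f p.1 W ∈ Lv (n+1) ∧ x ∈ (f p.1 W).2 := by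
      intro n p hp hxp
      have hx1 := hx (n+1)
      simp only [hG, mem_iUnion] at hx1
      obtain ⟨q, hq, hxq⟩ := hx1
      rw [hLvS] at hq
      simp only [mem_iUnion] at hq
      obtain ⟨p', hp', hqc⟩ := hq
      have hpp' : p' = p := by
        by_contra hne
        exact Set.disjoint_left.1 (hdisj n p' hp' p hp hne)
          ((hchild_sub _ _ hqc).2.2 hxq) hxp
      subst hpp'
      obtain ⟨W, hW, hfW⟩ := hqc
      obtain ⟨hWo, hWne, hWsub⟩ := (hMmem p').1 W hW
      refine ⟨W, hWo, hWne, hWsub, ?_, ?_⟩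
      · rw [hfW, hLvS]; simp only [mem_iUnion]
        exact ⟨p', hp', W, hW, hfW⟩
      · rw [hfW]; exact hxq
    -- build the branch by recursion
    have hroot : ((a₀, univ) : A × Set X) ∈ Lv 0 ∧ x ∈ ((a₀, univ) : A × Set X).2 := by
      exact ⟨by rw [hLv0]; rfl, mem_univ x⟩
    choose Wf hWfo hWfne hWfsub hWfLv hWfx using keyx
    let q : (n : ℕ) → {p : A × Set X // p ∈ Lv n ∧ x ∈ p.2} := fun n =>
      Nat.rec ⟨(a₀, univ), hroot⟩
        (fun n ih => ⟨f ih.1.1 (Wf n ih.1 ih.2.1 ih.2.2),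
          hWfLv n ih.1 ih.2.1 ih.2.2, hWfx n ih.1 ih.2.1 ih.2.2⟩) n
    have hqS : ∀ n, (q (n+1)).1 = f (q n).1.1 (Wf n (q n).1 (q n).2.1 (q n).2.2) := fun n => rfl
    set a : ℕ → A := fun n => (q n).1.1 with ha
    set W : ℕ → Set X := fun n => Wf n (q n).1 (q n).2.1 (q n).2.2 with hWdef
    set W' : ℕ → Set X := fun n => (q (n+1)).1.2 with hW'def
    have hfa : ∀ n, f (a n) (W n) = (a (n+1), W' n) := by
      intro n
      show f (q n).1.1 (Wf n (q n).1 (q n).2.1 (q n).2.2) = ((q (n+1)).1.1, (q (n+1)).1.2)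
      rw [← hqS n]
    have := hplays a W W' rfl (fun n => hWfo _ _ _ _) (fun n => hWfne _ _ _ _) hfa
      (fun n => by
        have h1 : W (n+1) ⊆ (q (n+1)).1.2 := hWfsub _ _ _ _
        exact h1) x hxR
    obtain ⟨n, hn⟩ := this
    exact hn (q (n+1)).2.2
  -- conclude meagreness
  rw [isMeagre_iff_countable_union_isNowhereDense]
  refine ⟨range (fun n => G n \ G (n+1)), ?_, countable_range _, ?_⟩
  · rintro t ⟨n, rfl⟩; exact hnwd n
  · intro x hxR
    have : ∃ n, x ∉ G n := by
      by_contra hcon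
      push_neg at hcon
      exact hbranch x hcon hxR
    have hne : Nat.find this ≠ 0 := by
      intro h0
      have := Nat.find_spec this
      rw [h0, hG0] at this
      exact this (mem_univ x)
    obtain ⟨m, hm⟩ := Nat.exists_eq_succ_of_ne_zero hne
    refine ⟨G m \ G (m+1), ⟨m, rfl⟩, ?_, ?_⟩
    · by_contra hcon
      exact absurd (Nat.find_min this (hm ▸ m.lt_succ_self) : ¬ x ∉ G m) (by simpa using hcon)
    · have h2 := Nat.find_spec this
      rw [hm] at h2
      exact h2

/-- State of the simultaneous plays construction. -/
structure GameSt (Y : Type*) where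
  n : ℕ
  c : ℕ
  pt : ℕ → Y
  hist : ℕ → List Y

/-- Specification of one step of the strategy for player `β`. -/
def StepSpec {X Y : Type*} (Δ : X → Set (Y × Y)) (V : Set Y) (σ : Y → List Y → Set Y)
    (a : GameSt Y) (W : Set X) (a' : GameSt Y) (W' : Set X) : Prop :=
  a'.n = a.n + 1 ∧
  ((∃ e b,
      (Nat.unpair a.n).1 < a.c ∧
      (∀ z ∈ e, z ∉ V) ∧
      LegalPlay (σ (a.pt (Nat.unpair a.n).1)) (a.hist (Nat.unpair a.n).1 ++ e) ∧
      σ (a.pt (Nat.unpair a.n).1) (a.hist (Nat.unpair a.n).1 ++ e) ⊆ V ∧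
      b ∈ σ (a.pt (Nat.unpair a.n).1) (a.hist (Nat.unpair a.n).1 ++ e) ∧
      a'.c = a.c + 1 ∧
      a'.pt = Function.update a.pt a.c b ∧
      a'.hist = Function.update (Function.update a.hist (Nat.unpair a.n).1
        (a.hist (Nat.unpair a.n).1 ++ e ++ [b])) a.c [] ∧
      (∀ x ∈ W', (b, a.pt (Nat.unpair a.n).1) ∉ Δ x))
   ∨ (a'.c = a.c ∧ a'.pt = a.pt ∧ a'.hist = a.hist ∧ W' = W ∧
      (a.c ≤ (Nat.unpair a.n).1 ∨ a.pt (Nat.unpair a.n).1 ∉ V ∨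
        ¬ ∃ e : List Y, (∀ z ∈ e, z ∉ V) ∧
          LegalPlay (σ (a.pt (Nat.unpair a.n).1)) (a.hist (Nat.unpair a.n).1 ++ e) ∧
          σ (a.pt (Nat.unpair a.n).1) (a.hist (Nat.unpair a.n).1 ++ e) ⊆ V)))

theorem key_proposition {X Y : Type*} [TopologicalSpace X] [TopologicalSpace Y]
    (Δ : X → Set (Y × Y)) (L : Set (Set Y)) (hL : ∀ S ∈ L, S.Nonempty)
    (hwin : ∀ y : Y, PlayerIWins L y)
    (R : Set X) (hR : ¬ IsMeagre R)
    (hfrag : ∀ x ∈ R, FragmentedBy (Δ x)) :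
    ∀ V : Set Y, IsOpen V → V.Nonempty →
      ∃ U : Set X, IsOpen U ∧ U.Nonempty ∧ ∃ y ∈ V, ∃ L' ∈ L, L' ⊆ V ∧
        ∀ b ∈ L', U ⊆ closure {x : X | x ∈ U ∧ (b, y) ∈ Δ x} := by
  classical
  intro V hVo hVne
  by_contra hcon
  push_neg at hcon
  have star : ∀ U : Set X, IsOpen U → U.Nonempty → ∀ y ∈ V, ∀ L' ∈ L, L' ⊆ V →
      ∃ b ∈ L', ∃ U' : Set X, IsOpen U' ∧ U'.Nonempty ∧ U' ⊆ U ∧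
        ∀ x ∈ U', (b, y) ∉ Δ x := by
    intro U hU hUne y hy L' hL' hL'V
    obtain ⟨b, hbL, hnsub⟩ := hcon U hU hUne y hy L' hL' hL'V
    rw [Set.not_subset] at hnsub
    obtain ⟨x₀, hx₀U, hx₀⟩ := hnsub
    rw [mem_closure_iff] at hx₀
    push_neg at hx₀
    obtain ⟨N, hNo, hx₀N, hN⟩ := hx₀
    refine ⟨b, hbL, N ∩ U, hNo.inter hU, ⟨x₀, hx₀N, hx₀U⟩, inter_subset_right, ?_⟩
    rintro x ⟨hxN, hxU⟩ hΔ
    have hmem : x ∈ N ∩ {x | x ∈ U ∧ (b, y) ∈ Δ x} := ⟨hxN, hxU, hΔ⟩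
    rw [hN] at hmem
    exact hmem
  choose σ hσ using hwin
  obtain ⟨y₀, hy₀⟩ := hVne
  set a₀ : GameSt Y := ⟨0, 1, fun _ => y₀, fun _ => []⟩ with ha₀def
  have key : ∀ (a : GameSt Y) (W : Set X), IsOpen W → W.Nonempty →
      ∃ r : GameSt Y × Set X, IsOpen r.2 ∧ r.2.Nonempty ∧ r.2 ⊆ W ∧
        StepSpec Δ V σ a W r.1 r.2 := by
    intro a W hWo hWne
    by_cases hi : (Nat.unpair a.n).1 < a.c
    · by_cases hptV : a.pt (Nat.unpair a.n).1 ∈ V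
      · by_cases hstuck : ∃ e : List Y, (∀ z ∈ e, z ∉ V) ∧
            LegalPlay (σ (a.pt (Nat.unpair a.n).1)) (a.hist (Nat.unpair a.n).1 ++ e) ∧
            σ (a.pt (Nat.unpair a.n).1) (a.hist (Nat.unpair a.n).1 ++ e) ⊆ V
        · obtain ⟨e, he1, he2, he3⟩ := hstuck
          have hLmem : σ (a.pt (Nat.unpair a.n).1) (a.hist (Nat.unpair a.n).1 ++ e) ∈ L :=
            (hσ (a.pt (Nat.unpair a.n).1)).1 _
          obtain ⟨b, hbL, U', hU'o, hU'ne, hU'sub, hU'Δ⟩ :=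
            star W hWo hWne (a.pt (Nat.unpair a.n).1) hptV _ hLmem he3
          exact ⟨(⟨a.n + 1, a.c + 1, Function.update a.pt a.c b,
              Function.update (Function.update a.hist (Nat.unpair a.n).1
                (a.hist (Nat.unpair a.n).1 ++ e ++ [b])) a.c []⟩, U'),
            hU'o, hU'ne, hU'sub, rfl,
            Or.inl ⟨e, b, hi, he1, he2, he3, hbL, rfl, rfl, rfl, hU'Δ⟩⟩
        · exact ⟨(⟨a.n + 1, a.c, a.pt, a.hist⟩, W), hWo, hWne, subset_rfl, rfl,
            Or.inr ⟨rfl, rfl, rfl, rfl, Or.inr (Or.inr hstuck)⟩⟩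
      · exact ⟨(⟨a.n + 1, a.c, a.pt, a.hist⟩, W), hWo, hWne, subset_rfl, rfl,
          Or.inr ⟨rfl, rfl, rfl, rfl, Or.inr (Or.inl hptV)⟩⟩
    · exact ⟨(⟨a.n + 1, a.c, a.pt, a.hist⟩, W), hWo, hWne, subset_rfl, rfl,
        Or.inr ⟨rfl, rfl, rfl, rfl, Or.inl (le_of_not_gt hi)⟩⟩
  set f : GameSt Y → Set X → GameSt Y × Set X := fun a W =>
    if h : IsOpen W ∧ W.Nonempty then (key a W h.1 h.2).choose else (a, W) with hfdef
  have hf : ∀ a W, IsOpen W → W.Nonempty →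
      IsOpen (f a W).2 ∧ (f a W).2.Nonempty ∧ (f a W).2 ⊆ W := by
    intro a W h1 h2
    have hspec := (key a W h1 h2).choose_spec
    have hfeq : f a W = (key a W h1 h2).choose := by
      simp only [hfdef]
      rw [dif_pos (⟨h1, h2⟩ : IsOpen W ∧ W.Nonempty)]
    rw [hfeq]
    exact ⟨hspec.1, hspec.2.1, hspec.2.2.1⟩
  have hfspec : ∀ a W, IsOpen W → W.Nonempty →
      StepSpec Δ V σ a W (f a W).1 (f a W).2 := by
    intro a W h1 h2
    have hspec := (key a W h1 h2).choose_spec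
    have hfeq : f a W = (key a W h1 h2).choose := by
      simp only [hfdef]
      rw [dif_pos (⟨h1, h2⟩ : IsOpen W ∧ W.Nonempty)]
    rw [hfeq]
    exact hspec.2.2.2
  apply hR
  apply bm_meagre R a₀ f hf
  intro a W W' ha0 hWo hWne hstep hWsub x hxR
  by_contra hcon2
  push_neg at hcon2
  have hSpec : ∀ k, StepSpec Δ V σ (a k) (W k) (a (k+1)) (W' k) := by
    intro k
    have h := hfspec (a k) (W k) (hWo k) (hWne k)
    rw [hstep k] at h
    exact h
  have hn : ∀ k, (a k).n = k := by
    intro k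
    induction k with
    | zero => rw [ha0]
    | succ k ih => rw [(hSpec k).1, ih]
  have hcm : ∀ k, (a k).c ≤ (a (k+1)).c := by
    intro k
    rcases (hSpec k).2 with h | h
    · obtain ⟨e, b, _, _, _, _, _, hc, _⟩ := h
      rw [hc]; exact Nat.le_succ _
    · rw [h.1]
  have hcmono : ∀ {k k' : ℕ}, k ≤ k' → (a k).c ≤ (a k').c :=
    fun h => monotone_nat_of_le_succ hcm h
  have hstab : ∀ k i, i < (a k).c →
      (a (k+1)).pt i = (a k).pt i ∧ (a k).hist i <+: (a (k+1)).hist i := by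
    intro k i hik
    rcases (hSpec k).2 with h | h
    · obtain ⟨e, b, hsch, he1, he2, he3, hb, hc, hpt, hh, hrec⟩ := h
      have hic : i ≠ (a k).c := Nat.ne_of_lt hik
      constructor
      · rw [hpt]; exact Function.update_of_ne hic _ _
      · rw [hh, Function.update_of_ne hic]
        by_cases hij : i = (Nat.unpair (a k).n).1
        · rw [hij, Function.update_self]
          exact ⟨e ++ [b], by rw [← List.append_assoc, ← hij]⟩
        · rw [Function.update_of_ne hij]
    · rw [h.2.1, h.2.2.1]
      exact ⟨rfl, List.prefix_rfl⟩
  have hptstab : ∀ k k', k ≤ k' → ∀ i, i < (a k).c →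
      (a k').pt i = (a k).pt i ∧ (a k).hist i <+: (a k').hist i := by
    intro k k' hkk'
    induction k' with
    | zero =>
        intro i hi
        have : k = 0 := Nat.le_zero.1 hkk'
        rw [this]
        exact ⟨rfl, List.prefix_rfl⟩
    | succ m ih =>
        intro i hi
        rcases Nat.lt_succ_iff_lt_or_eq.1 (Nat.lt_succ_of_le hkk') with hlt | heq
        · have hkm : k ≤ m := Nat.lt_succ_iff.1 hlt
          have h1 := ih hkm i hi
          have h2 := hstab m i (lt_of_lt_of_le hi (hcmono hkm))
          exact ⟨h2.1.trans h1.1, h1.2.trans h2.2⟩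
        · rw [heq]
          exact ⟨rfl, List.prefix_rfl⟩
  have hcpos : ∀ k, 1 ≤ (a k).c := by
    intro k
    have : (a 0).c = 1 := by rw [ha0]
    rw [← this]
    exact hcmono (Nat.zero_le k)
  have hptV : ∀ k i, i < (a k).c → (a k).pt i ∈ V := by
    intro k
    induction k with
    | zero =>
        intro i hi
        rw [ha0]
        exact hy₀
    | succ k ih =>
        intro i hi
        rcases (hSpec k).2 with h | h
        · obtain ⟨e, b, hsch, he1, he2, he3, hb, hc, hpt, hh, hrec⟩ := h
          rw [hpt]
          by_cases hic : i = (a k).c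
          · rw [hic, Function.update_self]
            exact he3 hb
          · rw [Function.update_of_ne hic]
            refine ih i ?_
            rw [hc] at hi
            omega
        · rw [h.2.1]
          refine ih i ?_
          rw [← h.1]
          exact hi
  have hlegal : ∀ k i, i < (a k).c → LegalPlay (σ ((a k).pt i)) ((a k).hist i) := by
    intro k
    induction k with
    | zero =>
        intro i hi
        rw [ha0]
        exact legalPlay_nil _
    | succ k ih =>
        intro i hi
        rcases (hSpec k).2 with h | h
        · obtain ⟨e, b, hsch, he1, he2, he3, hb, hc, hpt, hh, hrec⟩ := h
          by_cases hic : i = (a k).c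
          · rw [hpt, hh, hic, Function.update_self, Function.update_self]
            exact legalPlay_nil _
          · rw [hpt, hh, Function.update_of_ne hic, Function.update_of_ne hic]
            by_cases hij : i = (Nat.unpair (a k).n).1
            · rw [hij, Function.update_self, ← hij]
              have hik : i < (a k).c := by
                rw [hc] at hi; omega
              rw [hij]
              exact legalPlay_append (by rw [← hij]; exact (hij ▸ he2)) (hij ▸ hb)
            · rw [Function.update_of_ne hij]
              refine ih i ?_
              rw [hc] at hi
              omega
        · rw [h.2.1, h.2.2.1]
          refine ih i ?_
          rw [← h.1]
          exact hi
  have hFact : ∀ k i, i < (a k).c → ∀ b' ∈ (a k).hist i, b' ∈ V →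
      (b', (a k).pt i) ∉ Δ x := by
    intro k
    induction k with
    | zero =>
        intro i hi b' hb' hb'V
        rw [ha0] at hb'
        exact absurd hb' (List.not_mem_nil)
    | succ k ih =>
        intro i hi b' hb' hb'V
        rcases (hSpec k).2 with h | h
        · obtain ⟨e, b, hsch, he1, he2, he3, hb, hc, hpt, hh, hrec⟩ := h
          by_cases hic : i = (a k).c
          · rw [hh, hic, Function.update_self] at hb'
            exact absurd hb' (List.not_mem_nil)
          · have hilt : i < (a k).c := by rw [hc] at hi; omega
            have hpt' : (a (k+1)).pt i = (a k).pt i := by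
              rw [hpt]; exact Function.update_of_ne hic _ _
            rw [hpt']
            rw [hh, Function.update_of_ne hic] at hb'
            by_cases hij : i = (Nat.unpair (a k).n).1
            · rw [hij, Function.update_self] at hb'
              rcases List.mem_append.1 hb' with hb'' | hb''
              · rcases List.mem_append.1 hb'' with h3 | h3
                · refine ih i hilt b' ?_ hb'V
                  rw [hij]; exact h3
                · exact absurd hb'V (he1 b' h3)
              · rw [List.mem_singleton.1 hb'']
                rw [hij]
                exact hrec x (hcon2 k)
            · rw [Function.update_of_ne hij] at hb'
              exact ih i hilt b' hb' hb'V
        · have hi' : i < (a k).c := by rw [← h.1]; exact hi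
          rw [h.2.2.1] at hb'
          rw [h.2.1]
          exact ih i hi' b' hb' hb'V
  have hCT : ∀ k i, i < (a k).c → ∀ b' ∈ (a k).hist i, b' ∈ V →
      ∃ j, j < (a k).c ∧ (a k).pt j = b' := by
    intro k
    induction k with
    | zero =>
        intro i hi b' hb' hb'V
        rw [ha0] at hb'
        exact absurd hb' (List.not_mem_nil)
    | succ k ih =>
        intro i hi b' hb' hb'V
        rcases (hSpec k).2 with h | h
        · obtain ⟨e, b, hsch, he1, he2, he3, hb, hc, hpt, hh, hrec⟩ := h
          have hlift : ∀ j, j < (a k).c ∧ (a k).pt j = b' →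
              ∃ j, j < (a (k+1)).c ∧ (a (k+1)).pt j = b' := by
            rintro j ⟨hj1, hj2⟩
            refine ⟨j, ?_, ?_⟩
            · rw [hc]; omega
            · rw [hpt, Function.update_of_ne (Nat.ne_of_lt hj1)]
              exact hj2
          by_cases hic : i = (a k).c
          · rw [hh, hic, Function.update_self] at hb'
            exact absurd hb' (List.not_mem_nil)
          · have hilt : i < (a k).c := by rw [hc] at hi; omega
            rw [hh, Function.update_of_ne hic] at hb'
            by_cases hij : i = (Nat.unpair (a k).n).1
            · rw [hij, Function.update_self] at hb'
              rcases List.mem_append.1 hb' with hb'' | hb''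
              · rcases List.mem_append.1 hb'' with h3 | h3
                · obtain ⟨j1, hj1, hj2⟩ := ih i hilt b' (by rw [hij]; exact h3) hb'V
                  exact hlift j1 ⟨hj1, hj2⟩
                · exact absurd hb'V (he1 b' h3)
              · refine ⟨(a k).c, ?_, ?_⟩
                · rw [hc]; omega
                · rw [hpt, Function.update_self]
                  exact (List.mem_singleton.1 hb'').symm
            · rw [Function.update_of_ne hij] at hb'
              obtain ⟨j1, hj1, hj2⟩ := ih i hilt b' hb' hb'V
              exact hlift j1 ⟨hj1, hj2⟩
        · have hi' : i < (a k).c := by rw [← h.1]; exact hi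
          rw [h.2.2.1] at hb'
          obtain ⟨j, hj1, hj2⟩ := ih i hi' b' hb' hb'V
          refine ⟨j, ?_, ?_⟩
          · rw [h.1]; exact hj1
          · rw [h.2.1]; exact hj2
  set S : Set Y := {s | ∃ k j, j < (a k).c ∧ (a k).pt j = s} with hSdef
  have hSne : S.Nonempty := by
    refine ⟨y₀, 0, 0, ?_, ?_⟩
    · rw [ha0]; exact Nat.zero_lt_one
    · rw [ha0]
  obtain ⟨O, hOo, hSOne, hsq⟩ := hfrag x hxR S hSne
  obtain ⟨s, hsS, hsO⟩ := hSOne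
  set Ch : Set Y := {b' | b' ∈ V ∧ ∃ k j, j < (a k).c ∧ (a k).pt j = s ∧ b' ∈ (a k).hist j}
    with hChdef
  have hsCh : s ∈ closure Ch := by
    obtain ⟨k₀, j, hj, hptj⟩ := hsS
    have hjk : ∀ k, k₀ ≤ k → j < (a k).c := fun k hk => lt_of_lt_of_le hj (hcmono hk)
    have hpts : ∀ k, k₀ ≤ k → (a k).pt j = s := fun k hk => by
      rw [(hptstab k₀ k hk j hj).1, hptj]
    have hsV : s ∈ V := hptj ▸ hptV k₀ j hj
    by_cases hstuckever : ∃ k, k₀ ≤ k ∧ ¬ ∃ e : List Y, (∀ z ∈ e, z ∉ V) ∧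
        LegalPlay (σ s) ((a k).hist j ++ e) ∧ σ s ((a k).hist j ++ e) ⊆ V
    · obtain ⟨k, hk, hstuck⟩ := hstuckever
      have hleg : LegalPlay (σ s) ((a k).hist j) := by
        have h := hlegal k j (hjk k hk)
        rw [hpts k hk] at h
        exact h
      have hcl := stuck_closure hVo hsV (hσ s) hleg hstuck
      refine closure_mono ?_ hcl
      intro z hz
      exact ⟨hz.2, k, j, hjk k hk, hpts k hk, hz.1⟩
    · push_neg at hstuckever
      have hunb : ∀ M : ℕ, ∃ k, k₀ ≤ k ∧ M ≤ ((a k).hist j).length := by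
        intro M
        induction M with
        | zero => exact ⟨k₀, le_rfl, Nat.zero_le _⟩
        | succ M ihM =>
            obtain ⟨k, hk, hM⟩ := ihM
            set t := Nat.pair j (k + 1) with htdef
            have htk : k + 1 ≤ t := Nat.right_le_pair _ _
            have htk₀ : k₀ ≤ t := le_trans (le_trans hk (Nat.le_succ k)) htk
            have hkt : k ≤ t := le_trans (Nat.le_succ k) htk
            have hsch : (Nat.unpair (a t).n).1 = j := by
              rw [hn t, htdef, Nat.unpair_pair]
            have hlen1 : M ≤ ((a t).hist j).length :=
              le_trans hM ((hptstab k t hkt j (hjk k hk)).2.length_le)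
            rcases (hSpec t).2 with h | h
            · obtain ⟨e, b, hsch', he1, he2, he3, hb, hc, hpt, hh, hrec⟩ := h
              refine ⟨t + 1, le_trans htk₀ (Nat.le_succ t), ?_⟩
              have hjc : j ≠ (a t).c := Nat.ne_of_lt (hjk t htk₀)
              have hht : (a (t+1)).hist j = (a t).hist j ++ e ++ [b] := by
                rw [hh, Function.update_of_ne hjc, hsch, Function.update_self]
              rw [hht]
              simp only [List.length_append, List.length_singleton]
              omega
            · exfalso
              rcases h.2.2.2.2 with hr | hr | hr
              · rw [hsch] at hr
                exact absurd (hjk t htk₀) (not_lt.2 hr)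
              · rw [hsch, hpts t htk₀] at hr
                exact hr hsV
              · rw [hsch, hpts t htk₀] at hr
                exact hr (hstuckever t htk₀)
      set l : ℕ → List Y := fun m => (a (k₀ + m)).hist j with hldef
      have hpre : ∀ m, l m <+: l (m+1) :=
        fun m => (hstab (k₀ + m) j (hjk _ (Nat.le_add_right _ _))).2
      have hlegl : ∀ m, LegalPlay (σ s) (l m) := by
        intro m
        have h := hlegal (k₀ + m) j (hjk _ (Nat.le_add_right _ _))
        rw [hpts _ (Nat.le_add_right _ _)] at h
        exact h
      have hlenl : ∀ M : ℕ, ∃ m, M ≤ (l m).length := by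
        intro M
        obtain ⟨k, hk, hM⟩ := hunb M
        refine ⟨k - k₀, ?_⟩
        rw [hldef]
        simp only []
        rw [show k₀ + (k - k₀) = k from by omega]
        exact hM
      obtain ⟨p, hp1, hp2⟩ := limit_play (σ s) l hpre hlegl hlenl
      have hwin := (hσ s).2 p hp1
      have hsub2 : Set.range p ⊆ Ch ∪ Vᶜ := by
        rintro z ⟨n, rfl⟩
        obtain ⟨m, hm⟩ := hp2 n
        by_cases hzV : p n ∈ V
        · exact Or.inl ⟨hzV, k₀ + m, j, hjk _ (Nat.le_add_right _ _),
            hpts _ (Nat.le_add_right _ _), hm⟩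
        · exact Or.inr hzV
      have hcl := closure_mono hsub2 hwin
      rw [closure_union, hVo.isClosed_compl.closure_eq] at hcl
      rcases hcl with h1 | h1
      · exact h1
      · exact absurd hsV h1
  obtain ⟨b, hbO, hbCh⟩ := mem_closure_iff.1 hsCh O hOo hsO
  obtain ⟨hbV, k, j, hj, hptj, hbh⟩ := hbCh
  have hbS : b ∈ S := by
    obtain ⟨j', hj', hptj'⟩ := hCT k j hj b hbh hbV
    exact ⟨k, j', hj', hptj'⟩
  have hΔmem : (b, s) ∈ Δ x := hsq b ⟨hbS, hbO⟩ s ⟨hsS, hsO⟩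
  have hnot : (b, (a k).pt j) ∉ Δ x := hFact k j hj b hbh hbV
  rw [hptj] at hnot
  exact hnot hΔmem
end

section
/- Let X be a Baire space, Y a topological space, (Z,d) a metric space, and f : X × Y → Z. Suppose: (a) for every y ∈ Y, the point y has a countable π-base in Y and the section f^y : x ↦ f(x,y) is quasicontinuous; (b) for every x ∈ X, the section f_x : y ↦ f(x,y) is fragmentable. Then f is cliquish on X × Y. -/
open Set Topology

def Quasicontinuous' {X Z : Type*} [TopologicalSpace X] [MetricSpace Z] (f : X → Z) : Prop :=
  ∀ ε : ℝ, 0 < ε → ∀ x : X, ∀ V ∈ nhds x,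
    ∃ O : Set X, IsOpen O ∧ O.Nonempty ∧ O ⊆ V ∧
      ∀ y ∈ O, dist (f x) (f y) < ε

def CliquishOn {X Z : Type*} [TopologicalSpace X] [MetricSpace Z] (f : X → Z) (S : Set X) : Prop :=
  ∀ ε : ℝ, 0 < ε → ∀ U : Set X, IsOpen U → (S ∩ U).Nonempty →
    ∃ O : Set X, IsOpen O ∧ (S ∩ O).Nonempty ∧ S ∩ O ⊆ U ∧
      ∀ x ∈ S ∩ O, ∀ y ∈ S ∩ O, dist (f x) (f y) < ε

def Fragmentable {X Z : Type*} [TopologicalSpace X] [MetricSpace Z] (f : X → Z) : Prop :=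
  ∀ S : Set X, S.Nonempty → CliquishOn f S

def CountablePiBase {Y : Type*} [TopologicalSpace Y] (y : Y) : Prop :=
  ∃ B : Set (Set Y), B.Countable ∧ (∀ O ∈ B, IsOpen O ∧ O.Nonempty) ∧
    ∀ U ∈ nhds y, ∃ O ∈ B, O ⊆ U


theorem baireDC {X : Type*} [TopologicalSpace X] [BaireSpace X] {T : Type*}
    (Inv : ℕ → T → Set X → Prop) (P : ℕ → T → T → X → Prop)
    (G₀ : Set X) (hG₀ : IsOpen G₀) (hG₀ne : G₀.Nonempty) (s₀ : T) (hInv₀ : Inv 0 s₀ G₀)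
    (hmono : ∀ k s A A', A' ⊆ A → Inv k s A → Inv k s A')
    (step : ∀ k s A, IsOpen A → A.Nonempty → A ⊆ G₀ → Inv k s A →
      ∃ s' A', IsOpen A' ∧ A'.Nonempty ∧ A' ⊆ A ∧ Inv (k+1) s' A' ∧ ∀ x ∈ A', P k s s' x) :
    ∃ (x : X) (σ : ℕ → T), σ 0 = s₀ ∧ ∀ k, P k (σ k) (σ (k+1)) x := by
  classical
  set Node := T × Set X with hNode
  let Good : ℕ → Node → Prop := fun k ν => IsOpen ν.2 ∧ ν.2.Nonempty ∧ ν.2 ⊆ G₀ ∧ Inv k ν.1 ν.2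
  let Child : ℕ → Node → Node → Prop := fun k ν ν' =>
    IsOpen ν'.2 ∧ ν'.2.Nonempty ∧ ν'.2 ⊆ ν.2 ∧ Inv (k+1) ν'.1 ν'.2 ∧ ∀ x ∈ ν'.2, P k ν.1 ν'.1 x
  have hchild : ∀ k ν, Good k ν → ∀ A₀ : Set X, IsOpen A₀ → A₀.Nonempty → A₀ ⊆ ν.2 →
      ∃ ν' : Node, Child k ν ν' ∧ ν'.2 ⊆ A₀ := by
    rintro k ν ⟨ho, hne, hsubG, hinv⟩ A₀ hA₀o hA₀ne hA₀s
    obtain ⟨s', A', h1, h2, h3, h4, h5⟩ :=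
      step k ν.1 A₀ hA₀o hA₀ne (hA₀s.trans hsubG) (hmono _ _ _ _ hA₀s hinv)
    exact ⟨(s', A'), ⟨h1, h2, h3.trans hA₀s, h4, h5⟩, h3⟩
  -- maximal disjoint families of children
  have hfam : ∀ (k : ℕ) (ν : Node), ∃ F : Set Node,
      Maximal (· ∈ {F : Set Node | (∀ ν' ∈ F, Child k ν ν') ∧
        F.Pairwise fun ν₁ ν₂ => Disjoint ν₁.2 ν₂.2}) F := by
    intro k ν
    apply zorn_subset
    intro c hc hchain
    refine ⟨⋃₀ c, ⟨?_, ?_⟩, fun s hs => subset_sUnion_of_mem hs⟩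
    · rintro ν' ⟨F, hF, hν'⟩
      exact (hc hF).1 ν' hν'
    · rintro ν₁ ⟨F₁, hF₁, h₁⟩ ν₂ ⟨F₂, hF₂, h₂⟩ hne
      rcases hchain.total hF₁ hF₂ with h | h
      · exact (hc hF₂).2 (h h₁) h₂ hne
      · exact (hc hF₁).2 h₁ (h h₂) hne
  choose Fam hFam using hfam
  have hFamChild : ∀ k ν, ∀ ν' ∈ Fam k ν, Child k ν ν' := fun k ν => (hFam k ν).1.1
  -- density of the union of a maximal family
  have hdense : ∀ k ν, Good k ν → ∀ A₀, IsOpen A₀ → A₀.Nonempty → A₀ ⊆ ν.2 →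
      ∃ ν' ∈ Fam k ν, (ν'.2 ∩ A₀).Nonempty := by
    intro k ν hg A₀ h1 h2 h3
    by_contra hcon
    push_neg at hcon
    obtain ⟨ν'', hch, hsub⟩ := hchild k ν hg A₀ h1 h2 h3
    obtain ⟨x, hx⟩ := hch.2.1
    have hnm : ν'' ∉ Fam k ν := by
      intro hm
      have : x ∈ ν''.2 ∩ A₀ := ⟨hx, hsub hx⟩
      rw [hcon ν'' hm] at this
      exact this
    have hins : insert ν'' (Fam k ν) ∈ {F : Set Node | (∀ ν' ∈ F, Child k ν ν') ∧
        F.Pairwise fun ν₁ ν₂ => Disjoint ν₁.2 ν₂.2} := by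
      constructor
      · rintro ν' (rfl | hν')
        · exact hch
        · exact hFamChild k ν ν' hν'
      · rw [Set.pairwise_insert]
        refine ⟨(hFam k ν).1.2, ?_⟩
        intro b hb _
        have hdis : Disjoint ν''.2 b.2 := by
          rw [Set.disjoint_left]
          intro a ha hab
          have : a ∈ b.2 ∩ A₀ := ⟨hab, hsub ha⟩
          rw [hcon b hb] at this
          exact this
        exact ⟨hdis, hdis.symm⟩
    have := (hFam k ν).2 hins (Set.subset_insert _ _)
    exact hnm (this (Set.mem_insert _ _))
  -- levels of the tree
  let Lev : ℕ → Set Node := fun k => Nat.rec {((s₀, G₀) : Node)} (fun k L => ⋃ ν ∈ L, Fam k ν) k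
  have hLev0 : Lev 0 = {((s₀, G₀) : Node)} := rfl
  have hLevS : ∀ k, Lev (k+1) = ⋃ ν ∈ Lev k, Fam k ν := fun k => rfl
  have hGood : ∀ k, ∀ ν ∈ Lev k, Good k ν := by
    intro k
    induction k with
    | zero =>
      rintro ν hν
      rw [hLev0, Set.mem_singleton_iff] at hν
      subst hν
      exact ⟨hG₀, hG₀ne, subset_rfl, hInv₀⟩
    | succ k ih =>
      rintro ν' hν'
      rw [hLevS, Set.mem_iUnion₂] at hν'
      obtain ⟨ν, hν, hmem⟩ := hν'
      have hch := hFamChild k ν ν' hmem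
      exact ⟨hch.1, hch.2.1, hch.2.2.1.trans (ih ν hν).2.2.1, hch.2.2.2.1⟩
  have hdisj : ∀ k, ∀ ν₁ ∈ Lev k, ∀ ν₂ ∈ Lev k, ν₁ ≠ ν₂ → Disjoint ν₁.2 ν₂.2 := by
    intro k
    induction k with
    | zero =>
      intro ν₁ h₁ ν₂ h₂ hne
      rw [hLev0, Set.mem_singleton_iff] at h₁ h₂
      exact absurd (h₁.trans h₂.symm) hne
    | succ k ih =>
      intro ν₁ h₁ ν₂ h₂ hne
      rw [hLevS, Set.mem_iUnion₂] at h₁ h₂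
      obtain ⟨μ₁, hμ₁, hm₁⟩ := h₁
      obtain ⟨μ₂, hμ₂, hm₂⟩ := h₂
      by_cases hμ : μ₁ = μ₂
      · subst hμ
        exact (hFam k μ₁).1.2 hm₁ hm₂ hne
      · exact ((ih μ₁ hμ₁ μ₂ hμ₂ hμ).mono
          (hFamChild k μ₁ ν₁ hm₁).2.2.1 (hFamChild k μ₂ ν₂ hm₂).2.2.1)
  let D : ℕ → Set X := fun k => ⋃ ν ∈ Lev k, ν.2
  have hDopen : ∀ k, IsOpen (D k) :=
    fun k => isOpen_biUnion (fun ν hν => (hGood k ν hν).1)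
  have hDsub : ∀ k, D k ⊆ closure (D (k+1)) := by
    intro k x hx
    rw [Set.mem_iUnion₂] at hx
    obtain ⟨ν, hν, hxν⟩ := hx
    rw [mem_closure_iff]
    intro W hWo hxW
    have hA₀ : IsOpen (W ∩ ν.2) := hWo.inter (hGood k ν hν).1
    obtain ⟨ν', hν', ⟨z, hz1, hz2⟩⟩ :=
      hdense k ν (hGood k ν hν) (W ∩ ν.2) hA₀ ⟨x, hxW, hxν⟩ Set.inter_subset_right
    refine ⟨z, hz2.1, ?_⟩
    rw [Set.mem_iUnion₂]
    exact ⟨ν', by rw [hLevS, Set.mem_iUnion₂]; exact ⟨ν, hν, hν'⟩, hz1⟩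
  have hD0 : ∀ k, D 0 ⊆ closure (D k) := by
    intro k
    induction k with
    | zero => exact subset_closure
    | succ k ih =>
      exact ih.trans (closure_minimal (hDsub k) isClosed_closure)
  have hD0ne : (D 0).Nonempty := by
    obtain ⟨x, hx⟩ := hG₀ne
    exact ⟨x, Set.mem_iUnion₂.mpr ⟨(s₀, G₀), rfl, hx⟩⟩
  -- Baire category
  have hOdense : ∀ k, Dense (D k ∪ (closure (D 0))ᶜ) := by
    intro k x
    by_cases hx : x ∈ closure (D 0)
    · exact closure_mono Set.subset_union_left ((closure_closure (s := D k)) ▸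
        closure_mono (hD0 k) hx)
    · exact subset_closure (Or.inr hx)
  have hIdense : Dense (⋂ k, (D k ∪ (closure (D 0))ᶜ)) :=
    dense_iInter_of_isOpen (fun k => (hDopen k).union (isClosed_closure.isOpen_compl)) hOdense
  obtain ⟨x, hxD0, hxI⟩ := hIdense.inter_open_nonempty (D 0) (hDopen 0) hD0ne
  have hxk : ∀ k, x ∈ D k := by
    intro k
    have := Set.mem_iInter.mp hxI k
    rcases this with h | h
    · exact h
    · exact absurd (subset_closure hxD0) h
  -- extract the branch
  have hnode : ∀ k, ∃ ν ∈ Lev k, x ∈ ν.2 := fun k => by simpa using Set.mem_iUnion₂.mp (hxk k)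
  choose ν hνmem hνx using hnode
  have hstepν : ∀ k, ν (k+1) ∈ Fam k (ν k) := by
    intro k
    have h := hνmem (k+1)
    rw [hLevS, Set.mem_iUnion₂] at h
    obtain ⟨μ, hμ, hm⟩ := h
    have hxμ : x ∈ μ.2 := (hFamChild k μ _ hm).2.2.1 (hνx (k+1))
    by_cases hμν : μ = ν k
    · rw [hμν] at hm; exact hm
    · exact absurd (hνx k) (Set.disjoint_left.mp (hdisj k μ hμ (ν k) (hνmem k) hμν) hxμ)
  refine ⟨x, fun k => (ν k).1, ?_, ?_⟩
  · have h := hνmem 0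
    rw [hLev0, Set.mem_singleton_iff] at h
    show (ν 0).1 = s₀
    rw [h]
  · intro k
    exact (hFamChild k (ν k) (ν (k+1)) (hstepν k)).2.2.2.2 x (hνx (k+1))

theorem cliquish_of_quasicontinuous_sections {X Y Z : Type*} [TopologicalSpace X]
    [BaireSpace X] [TopologicalSpace Y] [MetricSpace Z] (f : X × Y → Z)
    (hY : ∀ y : Y, CountablePiBase y)
    (hqc : ∀ y : Y, Quasicontinuous' fun x : X => f (x, y))
    (hfrag : ∀ x : X, Fragmentable fun y : Y => f (x, y)) :
    Cliquish f := by
  classical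
  intro ε hε U hU hUne
  obtain ⟨⟨x₀, y₀⟩, hmem⟩ := hUne
  rw [isOpen_prod_iff] at hU
  obtain ⟨U₁, V₁, hU₁, hV₁, hx₀, hy₀, hsub⟩ := hU x₀ y₀ hmem
  set δ := ε / 100 with hδdef
  have hδ : 0 < δ := by positivity
  set η := ε / 10 with hηdef
  have hη : 0 < η := by positivity
  -- countable π-bases inside V₁
  have hbbex : ∀ y : Y, ∃ bb : ℕ → Set Y, y ∈ V₁ →
      (∀ n, IsOpen (bb n) ∧ (bb n).Nonempty ∧ bb n ⊆ V₁) ∧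
      (∀ N ∈ nhds y, ∃ n, bb n ⊆ N) := by
    intro y
    by_cases hy : y ∈ V₁
    · obtain ⟨B, hBc, hBo, hBp⟩ := hY y
      have hne : {O ∈ B | O ⊆ V₁}.Nonempty := by
        obtain ⟨O, hO, hOs⟩ := hBp V₁ (hV₁.mem_nhds hy)
        exact ⟨O, hO, hOs⟩
      obtain ⟨g, hg⟩ := (hBc.mono (Set.sep_subset _ _)).exists_eq_range hne
      refine ⟨g, fun _ => ⟨?_, ?_⟩⟩
      · intro n
        have hmemg : g n ∈ {O ∈ B | O ⊆ V₁} := by rw [hg]; exact Set.mem_range_self n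
        exact ⟨(hBo _ hmemg.1).1, (hBo _ hmemg.1).2, hmemg.2⟩
      · intro N hN
        obtain ⟨O, hO, hOs⟩ := hBp (N ∩ V₁) (Filter.inter_mem hN (hV₁.mem_nhds hy))
        have hOm : O ∈ {O ∈ B | O ⊆ V₁} := ⟨hO, hOs.trans Set.inter_subset_right⟩
        rw [hg] at hOm
        obtain ⟨n, rfl⟩ := hOm
        exact ⟨n, hOs.trans Set.inter_subset_left⟩
    · exact ⟨fun _ => ∅, fun h => absurd h hy⟩
  choose bb hbb using hbbex
  set E : Y → Set Y → Set X :=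
    fun y B => {x | x ∈ U₁ ∧ ∀ z ∈ B, dist (f (x, z)) (f (x, y)) ≤ η} with hEdef
  by_cases hc : ∃ y ∈ V₁, ∃ B : Set Y, IsOpen B ∧ B.Nonempty ∧ B ⊆ V₁ ∧
      ∃ G : Set X, IsOpen G ∧ G.Nonempty ∧ G ⊆ U₁ ∧ G ⊆ closure (E y B)
  · -- Case 1 : some E set is somewhere dense
    obtain ⟨y, hyV, B, hBo, hBne, hBV, G, hGo, hGne, hGU, hGcl⟩ := hc
    obtain ⟨xs, hxs⟩ := hGne
    obtain ⟨O₁, hO₁o, hO₁ne, hO₁s, hO₁⟩ := hqc y δ hδ xs G (hGo.mem_nhds hxs)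
    have key : ∀ p ∈ O₁ ×ˢ B, dist (f p) (f (xs, y)) < η + 2 * δ := by
      rintro ⟨x, z⟩ ⟨hxO, hzB⟩
      obtain ⟨O', hO'o, hO'ne, hO's, hO'⟩ := hqc z δ hδ x O₁ (hO₁o.mem_nhds hxO)
      obtain ⟨u, hu⟩ := hO'ne
      have hucl : u ∈ closure (E y B) := hGcl (hO₁s (hO's hu))
      obtain ⟨e, heO', heE⟩ := mem_closure_iff.mp hucl O' hO'o hu
      have h1 : dist (f (x, z)) (f (e, z)) < δ := hO' e heO'
      have h2 : dist (f (e, z)) (f (e, y)) ≤ η := heE.2 z hzB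
      have h3 : dist (f (e, y)) (f (xs, y)) < δ := by
        rw [dist_comm]; exact hO₁ e (hO's heO')
      calc dist (f (x, z)) (f (xs, y)) ≤
          dist (f (x, z)) (f (e, z)) + dist (f (e, z)) (f (e, y)) +
            dist (f (e, y)) (f (xs, y)) := dist_triangle4 _ _ _ _
        _ < δ + η + δ := by linarith
        _ = η + 2 * δ := by ring
    refine ⟨O₁ ×ˢ B, hO₁o.prod hBo, hO₁ne.prod hBne, ?_, ?_⟩
    · exact (Set.prod_mono (hO₁s.trans hGU) hBV).trans hsub
    · intro p hp q hq
      have hεbound : (η + 2 * δ) + (η + 2 * δ) ≤ ε := by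
        rw [hηdef, hδdef]; linarith
      calc dist (f p) (f q) ≤ dist (f p) (f (xs, y)) + dist (f (xs, y)) (f q) :=
            dist_triangle _ _ _
        _ < (η + 2 * δ) + (η + 2 * δ) := by
            have := key p hp
            have hq' := key q hq
            rw [dist_comm (f (xs, y)) (f q)]
            linarith
        _ ≤ ε := hεbound
  · -- Case 2 : all E sets are nowhere dense; derive a contradiction
    exfalso
    push_neg at hc
    have hNC : ∀ y ∈ V₁, ∀ B : Set Y, IsOpen B → B.Nonempty → B ⊆ V₁ →
        ∀ A : Set X, IsOpen A → A.Nonempty → A ⊆ U₁ →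
        (A \ closure (E y B)).Nonempty := by
      intro y hy B h1 h2 h3 A h4 h5 h6
      rw [Set.nonempty_iff_ne_empty]
      intro hemp
      rw [Set.diff_eq_empty] at hemp
      exact hc y hy B h1 h2 h3 A h4 h5 h6 hemp
    obtain ⟨G₀, hG₀o, hG₀ne, hG₀s, hG₀p⟩ := hqc y₀ δ hδ x₀ U₁ (hU₁.mem_nhds hx₀)
    set v₀ : Z := f (x₀, y₀) with hv₀
    set Inv : ℕ → (ℕ → Y × Z) → Set X → Prop := fun k s A =>
      ∀ i ≤ k, (s i).1 ∈ V₁ ∧ ∀ x ∈ A, dist (f (x, (s i).1)) ((s i).2) < δ with hInvdef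
    set P : ℕ → (ℕ → Y × Z) → (ℕ → Y × Z) → X → Prop := fun k s s' x =>
      (∀ i ≤ k, s' i = s i) ∧
      (s' (k + 1)).1 ∈ bb (s (Nat.unpair k).1).1 (Nat.unpair k).2 ∧
      η - δ < dist ((s' (k + 1)).2) ((s (Nat.unpair k).1).2) ∧
      dist (f (x, (s' (k + 1)).1)) ((s' (k + 1)).2) < δ ∧
      dist (f (x, (s (Nat.unpair k).1).1)) ((s (Nat.unpair k).1).2) < δ with hPdef
    have hInv₀ : Inv 0 (fun _ => (y₀, v₀)) G₀ := by
      intro i _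
      refine ⟨hy₀, fun x hx => ?_⟩
      rw [dist_comm]
      exact hG₀p x hx
    have hmono : ∀ k s A A', A' ⊆ A → Inv k s A → Inv k s A' := by
      intro k s A A' hAA h i hi
      exact ⟨(h i hi).1, fun x hx => (h i hi).2 x (hAA hx)⟩
    have hstep : ∀ k s A, IsOpen A → A.Nonempty → A ⊆ G₀ → Inv k s A →
        ∃ s' A', IsOpen A' ∧ A'.Nonempty ∧ A' ⊆ A ∧ Inv (k + 1) s' A' ∧
          ∀ x ∈ A', P k s s' x := by
      intro k s A hAo hAne hAG hinv
      have hile : (Nat.unpair k).1 ≤ k := Nat.unpair_left_le k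
      obtain ⟨hyV, hyinv⟩ := hinv (Nat.unpair k).1 hile
      set y := (s (Nat.unpair k).1).1 with hydef
      set v := (s (Nat.unpair k).1).2 with hvdef
      set B := bb y (Nat.unpair k).2 with hBdef
      obtain ⟨hBo, hBne, hBV⟩ := (hbb y hyV).1 (Nat.unpair k).2
      have hAU : A ⊆ U₁ := hAG.trans hG₀s
      obtain ⟨x', hx'A, hx'ncl⟩ := hNC y hyV B hBo hBne hBV A hAo hAne hAU
      have hx'nE : x' ∉ E y B := fun h => hx'ncl (subset_closure h)
      have hx'U : x' ∈ U₁ := hAU hx'A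
      have hzex : ∃ z ∈ B, η < dist (f (x', z)) (f (x', y)) := by
        by_contra hcon
        push_neg at hcon
        exact hx'nE ⟨hx'U, fun z hz => hcon z hz⟩
      obtain ⟨z, hzB, hzfar⟩ := hzex
      set v' : Z := f (x', z) with hv'
      have hvv' : η - δ < dist v' v := by
        have ht : dist (f (x', z)) (f (x', y)) ≤ dist v' v + dist v (f (x', y)) := by
          rw [hv']; exact dist_triangle _ _ _
        have hxy : dist (f (x', y)) v < δ := hyinv x' hx'A
        rw [dist_comm] at hxy
        linarith
      obtain ⟨O, hOo, hOne, hOs, hOp⟩ := hqc z δ hδ x' (A \ closure (E y B))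
        ((hAo.sdiff isClosed_closure).mem_nhds ⟨hx'A, hx'ncl⟩)
      have hOA : O ⊆ A := hOs.trans Set.diff_subset
      refine ⟨Function.update s (k + 1) (z, v'), O, hOo, hOne, hOA, ?_, ?_⟩
      · intro i' hi'
        by_cases hik : i' = k + 1
        · subst hik
          rw [Function.update_self]
          refine ⟨hBV hzB, fun x hx => ?_⟩
          rw [dist_comm]
          exact hOp x hx
        · rw [Function.update_of_ne hik]
          have hi'k : i' ≤ k := by omega
          exact ⟨(hinv i' hi'k).1, fun x hx => (hinv i' hi'k).2 x (hOA hx)⟩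
      · intro x hx
        refine ⟨fun i hi => Function.update_of_ne (by omega) _ _, ?_, ?_, ?_, ?_⟩
        · rw [Function.update_self]
          exact hzB
        · rw [Function.update_self]
          exact hvv'
        · rw [Function.update_self]
          rw [dist_comm]
          exact hOp x hx
        · exact hyinv x (hOA hx)
    obtain ⟨xb, σ, hσ0, hσP⟩ := baireDC Inv P G₀ hG₀o hG₀ne _ hInv₀ hmono hstep
    set c : ℕ → Y × Z := fun i => σ i i with hcdef
    have hstab : ∀ i k, i ≤ k → σ k i = c i := by
      intro i k hik
      induction k with
      | zero =>
        have : i = 0 := Nat.le_zero.mp hik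
        subst this; rfl
      | succ k ih =>
        by_cases h : i ≤ k
        · rw [(hσP k).1 i h, ih h]
        · have : i = k + 1 := by omega
          subst this; rfl
    have hcV : ∀ i, (c i).1 ∈ V₁ := by
      intro i
      induction i using Nat.strong_induction_on with
      | _ i ih =>
        match i with
        | 0 =>
          show (σ 0 0).1 ∈ V₁
          rw [hσ0]
          exact hy₀
        | (j + 1) =>
          have hP := hσP j
          have h2 := hP.2.1
          have hu : (Nat.unpair j).1 ≤ j := Nat.unpair_left_le j
          rw [hstab _ j hu] at h2
          have huV : (c (Nat.unpair j).1).1 ∈ V₁ := ih _ (Nat.lt_succ_of_le hu)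
          exact ((hbb _ huV).1 (Nat.unpair j).2).2.2 h2
    set ε' := η - 3 * δ with hε'def
    have hε'pos : 0 < ε' := by rw [hε'def, hηdef, hδdef]; linarith
    set S : Set Y := Set.range fun i => (c i).1 with hSdef
    have hSne : S.Nonempty := ⟨(c 0).1, Set.mem_range_self 0⟩
    obtain ⟨O, hOo, hOne, hOsub, hosc⟩ := hfrag xb S hSne ε' hε'pos Set.univ isOpen_univ
      (by simpa using hSne)
    obtain ⟨w, hwS, hwO⟩ := hOne
    obtain ⟨i, rfl⟩ := hwS
    have hwO' : (c i).1 ∈ O := hwO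
    obtain ⟨n, hn⟩ := (hbb _ (hcV i)).2 O (hOo.mem_nhds hwO')
    set k := Nat.pair i n with hkdef
    have hik : i ≤ k := Nat.left_le_pair i n
    have hP := hσP k
    have hup1 : (Nat.unpair k).1 = i := by rw [hkdef, Nat.unpair_pair]
    have hup2 : (Nat.unpair k).2 = n := by rw [hkdef, Nat.unpair_pair]
    have hσki : σ k (Nat.unpair k).1 = c i := by rw [hup1]; exact hstab i k hik
    have h2 := hP.2.1
    rw [hσki, hup2] at h2
    -- h2 : (σ (k+1) (k+1)).1 ∈ bb (c i).1 n,  and σ (k+1) (k+1) = c (k+1)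
    have h3 := hP.2.2.1
    rw [hσki] at h3
    have h4 := hP.2.2.2.1
    have h5 := hP.2.2.2.2
    rw [hσki] at h5
    have hck : σ (k + 1) (k + 1) = c (k + 1) := rfl
    rw [hck] at h2 h3 h4
    have hzO : (c (k + 1)).1 ∈ O := hn h2
    have hzS : (c (k + 1)).1 ∈ S := Set.mem_range_self _
    have hwS' : (c i).1 ∈ S := Set.mem_range_self _
    have hfar : ε' < dist (f (xb, (c (k + 1)).1)) (f (xb, (c i).1)) := by
      have ht : dist ((c (k + 1)).2) ((c i).2) ≤
          dist ((c (k + 1)).2) (f (xb, (c (k + 1)).1)) +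
          dist (f (xb, (c (k + 1)).1)) (f (xb, (c i).1)) +
          dist (f (xb, (c i).1)) ((c i).2) := dist_triangle4 _ _ _ _
      rw [dist_comm ((c (k + 1)).2) (f (xb, (c (k + 1)).1))] at ht
      rw [hε'def]
      linarith
    have hclose := hosc ((c (k + 1)).1) ⟨hzS, hzO⟩ ((c i).1) ⟨hwS', hwO'⟩
    exact absurd hclose (not_lt.mpr (le_of_lt hfar))
end

section
/- Let X be a Baire space, Y a topological space in which every point has a countable π-base, (Z,d) a metric space, and f : X × Y → Z. Suppose f is horizontally quasicontinuous, every section f^y : x ↦ f(x,y) is cliquish, and every section f_x : y ↦ f(x,y) is fragmentable. Then f is cliquish. -/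
open Set Topology

/-- `f` is horizontally quasicontinuous at `(a, b)`. -/
def HorizontallyQuasicontinuousAt {X Y Z : Type*} [TopologicalSpace X] [TopologicalSpace Y]
    [MetricSpace Z] (f : X × Y → Z) (a : X) (b : Y) : Prop :=
  ∀ W ∈ nhds (f (a, b)), ∀ U ∈ nhds a, ∀ V ∈ nhds b,
    ∃ O : Set X, IsOpen O ∧ O.Nonempty ∧ O ⊆ U ∧ ∃ y ∈ V, ∀ x ∈ O, f (x, y) ∈ W

namespace CliquishAux

attribute [local instance] Classical.propDecidable

/-! ### List helpers -/

theorem my_getD_append {α : Type*} (l r : List α) (d : α) (i : ℕ) (h : i < l.length) :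
    (l ++ r).getD i d = l.getD i d := by
  simp [List.getD_eq_getElem?_getD, List.getElem?_append_left h]

theorem my_getD_mem {α : Type*} (l : List α) (d : α) (i : ℕ) (h : i < l.length) :
    l.getD i d ∈ l := by
  simp only [List.getD_eq_getElem?_getD, List.getElem?_eq_getElem h, Option.getD_some]
  exact List.getElem_mem h

theorem my_index_of_mem {α : Type*} {l : List α} {t : α} (d : α) (ht : t ∈ l) :
    ∃ i, i < l.length ∧ l.getD i d = t := by
  obtain ⟨i, h, rfl⟩ := List.getElem_of_mem ht
  exact ⟨i, h, by simp [List.getD_eq_getElem?_getD, List.getElem?_eq_getElem h]⟩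

/-! ### Scheduling -/

def sched (n : ℕ) : ℕ × ℕ := Nat.unpair (Nat.unpair n).2

theorem sched_exists (i k m : ℕ) : ∃ n, m ≤ n ∧ sched n = (i, k) :=
  ⟨Nat.pair m (Nat.pair i k), Nat.left_le_pair _ _, by simp [sched, Nat.unpair_pair]⟩

/-! ### Generic chain existence -/

theorem exists_chain {α : Type*} (lv : ℕ → Set α) (st : ℕ → α → Set α) (r : α)
    (P : α → Prop) (h0 : r ∈ lv 0 ∧ P r)
    (hstep : ∀ n c, c ∈ lv n → P c → ∃ d, d ∈ st n c ∧ d ∈ lv (n + 1) ∧ P d) :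
    ∃ ch : ℕ → α, ch 0 = r ∧ (∀ n, ch n ∈ lv n ∧ P (ch n)) ∧
      ∀ n, ch (n + 1) ∈ st n (ch n) := by
  let g : ∀ n : ℕ, {c : α // c ∈ lv n ∧ P c} := fun n =>
    Nat.rec ⟨r, h0⟩
      (fun n p =>
        ⟨(hstep n p.1 p.2.1 p.2.2).choose,
          (hstep n p.1 p.2.1 p.2.2).choose_spec.2.1,
          (hstep n p.1 p.2.1 p.2.2).choose_spec.2.2⟩) n
  refine ⟨fun n => (g n).1, rfl, fun n => (g n).2, fun n => ?_⟩
  exact (hstep n (g n).1 (g n).2.1 (g n).2.2).choose_spec.1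

variable {X Y Z : Type*} [TopologicalSpace X] [TopologicalSpace Y] [MetricSpace Z]

/-! ### The tree of open sets -/

/-- One step of the tree construction. -/
def stepFun (Fam : Set X → Set Y → Set (Set X × Y × Y)) (e : Y → ℕ → Set Y) (b : Y)
    (n : ℕ) (c : Set X × List Y) : Set (Set X × List Y) :=
  if (sched n).1 < c.2.length then
    (fun t : Set X × Y × Y => (t.1, c.2 ++ [t.2.1, t.2.2])) ''
      Fam c.1 (e (c.2.getD (sched n).1 b) (sched n).2)
  else {c}

def levels (Fam : Set X → Set Y → Set (Set X × Y × Y)) (e : Y → ℕ → Set Y) (b : Y)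
    (U : Set X) : ℕ → Set (Set X × List Y)
  | 0 => {(U, [b])}
  | n + 1 => ⋃ c ∈ levels Fam e b U n, stepFun Fam e b n c

def NodeOK (U : Set X) (V : Set Y) (c : Set X × List Y) : Prop :=
  IsOpen c.1 ∧ c.1.Nonempty ∧ c.1 ⊆ U ∧ c.2 ≠ [] ∧ ∀ y ∈ c.2, y ∈ V

section Tree

variable (f : X × Y → Z) (U : Set X) (V : Set Y) (b : Y) (ε2 : ℝ)
variable (Fam : Set X → Set Y → Set (Set X × Y × Y)) (e : Y → ℕ → Set Y)

/-- Hypothesis on the maximal-family choice function. -/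
def FamOK : Prop :=
  ∀ O M, IsOpen O → O.Nonempty → O ⊆ U → IsOpen M → M.Nonempty → M ⊆ V →
    (∀ t ∈ Fam O M, IsOpen t.1 ∧ t.1.Nonempty ∧ t.1 ⊆ O ∧ t.2.1 ∈ M ∧ t.2.2 ∈ M ∧
        ∀ x ∈ t.1, ε2 ≤ dist (f (x, t.2.1)) (f (x, t.2.2))) ∧
    (∀ t ∈ Fam O M, ∀ t' ∈ Fam O M, t ≠ t' → Disjoint t.1 t'.1) ∧
    (∀ W, IsOpen W → W.Nonempty → W ⊆ O → ∃ t ∈ Fam O M, (W ∩ t.1).Nonempty)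

/-- Hypothesis on the π-base enumeration. -/
def EOK : Prop :=
  ∀ y ∈ V, (∀ k, IsOpen (e y k) ∧ (e y k).Nonempty ∧ e y k ⊆ V) ∧
    ∀ O : Set Y, IsOpen O → y ∈ O → ∃ k, e y k ⊆ O ∩ V

variable {f U V b ε2 Fam e}
variable (hFam : FamOK f U V ε2 Fam) (hE : EOK V e)
variable (hU : IsOpen U) (hUne : U.Nonempty) (hb : b ∈ V)

include hE in
theorem M_ok {c : Set X × List Y} (hc : NodeOK U V c) {i : ℕ} (h : i < c.2.length) (k : ℕ) :
    IsOpen (e (c.2.getD i b) k) ∧ (e (c.2.getD i b) k).Nonempty ∧ e (c.2.getD i b) k ⊆ V :=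
  (hE _ (hc.2.2.2.2 _ (my_getD_mem _ _ _ h))).1 k

include hFam hE in
theorem step_sub {c : Set X × List Y} (hc : NodeOK U V c) {n : ℕ} {d : Set X × List Y}
    (hd : d ∈ stepFun Fam e b n c) :
    d.1 ⊆ c.1 ∧ NodeOK U V d ∧
      (∃ r, d.2 = c.2 ++ r) ∧
      ((sched n).1 < c.2.length →
        ∃ t ∈ Fam c.1 (e (c.2.getD (sched n).1 b) (sched n).2),
          d = (t.1, c.2 ++ [t.2.1, t.2.2])) := by
  unfold stepFun at hd
  split_ifs at hd with h
  · obtain ⟨t, ht, rfl⟩ := hd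
    have hM := M_ok hE (b := b) hc h (sched n).2
    have hspec := (hFam c.1 _ hc.1 hc.2.1 hc.2.2.1 hM.1 hM.2.1 hM.2.2).1 t ht
    refine ⟨hspec.2.2.1, ⟨hspec.1, hspec.2.1, hspec.2.2.1.trans hc.2.2.1, by simp, ?_⟩,
      ⟨[t.2.1, t.2.2], rfl⟩, fun _ => ⟨t, ht, rfl⟩⟩
    intro y hy
    rcases List.mem_append.1 hy with hy | hy
    · exact hc.2.2.2.2 y hy
    · simp only [List.mem_cons, List.mem_singleton, List.not_mem_nil, or_false] at hy
      rcases hy with rfl | rfl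
      · exact hM.2.2 hspec.2.2.2.1
      · exact hM.2.2 hspec.2.2.2.2.1
  · rcases hd with rfl
    exact ⟨subset_rfl, hc, ⟨[], by simp⟩, fun hlt => absurd hlt h⟩

include hFam hE hU hUne hb in
theorem levels_nodeOK : ∀ n, ∀ c ∈ levels Fam e b U n, NodeOK U V c := by
  intro n
  induction n with
  | zero =>
    intro c hc
    rcases hc with rfl
    exact ⟨hU, hUne, subset_rfl, by simp, by intro y hy; simp at hy; subst hy; exact hb⟩
  | succ n ih =>
    intro c hc
    simp only [levels, mem_iUnion] at hc
    obtain ⟨p, hp, hcp⟩ := hc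
    exact (step_sub hFam hE (ih p hp) hcp).2.1

include hFam hE hU hUne hb in
theorem levels_disjoint : ∀ n, ∀ c ∈ levels Fam e b U n, ∀ c' ∈ levels Fam e b U n,
    c ≠ c' → Disjoint c.1 c'.1 := by
  intro n
  induction n with
  | zero =>
    intro c hc c' hc' hne
    rcases hc with rfl; rcases hc' with rfl; exact absurd rfl hne
  | succ n ih =>
    intro c hc c' hc' hne
    simp only [levels, mem_iUnion] at hc hc'
    obtain ⟨p, hp, hcp⟩ := hc
    obtain ⟨p', hp', hcp'⟩ := hc'
    by_cases hpp : p = p'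
    · subst hpp
      have hK := levels_nodeOK hFam hE hU hUne hb n p hp
      unfold stepFun at hcp hcp'
      split_ifs at hcp hcp' with h
      · obtain ⟨t, ht, rfl⟩ := hcp
        obtain ⟨t', ht', rfl⟩ := hcp'
        have hM := M_ok hE (b := b) hK h (sched n).2
        have htt : t ≠ t' := by rintro rfl; exact hne rfl
        exact (hFam p.1 _ hK.1 hK.2.1 hK.2.2.1 hM.1 hM.2.1 hM.2.2).2.1 t ht t' ht' htt
      · rcases hcp with rfl; rcases hcp' with rfl; exact absurd rfl hne
    · have h1 := (step_sub hFam hE (levels_nodeOK hFam hE hU hUne hb n p hp) hcp).1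
      have h2 := (step_sub hFam hE (levels_nodeOK hFam hE hU hUne hb n p' hp') hcp').1
      exact (ih p hp p' hp' hpp).mono h1 h2

include hFam hE hU hUne hb in
theorem levels_dense : ∀ n, ∀ W : Set X, IsOpen W → (W ∩ U).Nonempty →
    ∃ c ∈ levels Fam e b U n, (W ∩ c.1).Nonempty := by
  intro n
  induction n with
  | zero => intro W _ hWU; exact ⟨(U, [b]), rfl, hWU⟩
  | succ n ih =>
    intro W hW hWU
    obtain ⟨c, hc, hWc⟩ := ih W hW hWU
    have hK := levels_nodeOK hFam hE hU hUne hb n c hc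
    by_cases h : (sched n).1 < c.2.length
    · have hM := M_ok hE (b := b) hK h (sched n).2
      obtain ⟨t, ht, htne⟩ :=
        (hFam c.1 _ hK.1 hK.2.1 hK.2.2.1 hM.1 hM.2.1 hM.2.2).2.2 (W ∩ c.1)
          (hW.inter hK.1) hWc inter_subset_right
      refine ⟨(t.1, c.2 ++ [t.2.1, t.2.2]), ?_, ?_⟩
      · simp only [levels, mem_iUnion]
        exact ⟨c, hc, by unfold stepFun; rw [if_pos h]; exact ⟨t, ht, rfl⟩⟩
      · exact htne.mono (by intro x hx; exact ⟨hx.1.1, hx.2⟩)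
    · refine ⟨c, ?_, hWc⟩
      simp only [levels, mem_iUnion]
      exact ⟨c, hc, by unfold stepFun; rw [if_neg h]; rfl⟩

end Tree

/-! ### The separation claim -/

theorem claim_sep (f : X × Y → Z) (U : Set X) (V : Set Y) (ε1 : ℝ)
    (hhqc : ∀ (a : X) (b : Y), HorizontallyQuasicontinuousAt f a b)
    (hclq : ∀ y : Y, Cliquish fun x : X => f (x, y))
    (hε1 : 0 < ε1)
    (hneg : ∀ (U3 : Set X) (V3 : Set Y) (z₀ : Z), IsOpen U3 → U3.Nonempty → U3 ⊆ U →
      IsOpen V3 → V3.Nonempty → V3 ⊆ V →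
      ∃ O, IsOpen O ∧ O.Nonempty ∧ O ⊆ U3 ∧ ∀ x ∈ O, ∃ y ∈ V3, ε1 < dist (f (x, y)) z₀) :
    ∀ U' V', IsOpen U' → U'.Nonempty → U' ⊆ U → IsOpen V' → V'.Nonempty → V' ⊆ V →
      ∃ O u w, IsOpen O ∧ O.Nonempty ∧ O ⊆ U' ∧ u ∈ V' ∧ w ∈ V' ∧
        ∀ x ∈ O, ε1 / 2 ≤ dist (f (x, u)) (f (x, w)) := by
  intro U' V' hU' hU'ne hU'U hV' hV'ne hV'V
  obtain ⟨y₁, hy₁⟩ := hV'ne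
  obtain ⟨O₁, hO₁, hO₁ne, hO₁sub, hO₁small⟩ :=
    hclq y₁ (ε1 / 8) (by linarith) U' hU' hU'ne
  obtain ⟨x₁, hx₁⟩ := hO₁ne
  obtain ⟨O', hO', hO'ne, hO'sub, hbad⟩ :=
    hneg O₁ V' (f (x₁, y₁)) hO₁ ⟨x₁, hx₁⟩ (hO₁sub.trans hU'U) hV' ⟨y₁, hy₁⟩ hV'V
  obtain ⟨x₂, hx₂⟩ := hO'ne
  obtain ⟨y₂, hy₂, hy₂far⟩ := hbad x₂ hx₂
  obtain ⟨O, hO, hOne, hOsub, u, huV', hclose⟩ :=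
    hhqc x₂ y₂ (Metric.ball (f (x₂, y₂)) (ε1 / 8))
      (Metric.ball_mem_nhds _ (by linarith)) O' (hO'.mem_nhds hx₂) V' (hV'.mem_nhds hy₂)
  refine ⟨O, u, y₁, hO, hOne, (hOsub.trans hO'sub).trans hO₁sub, huV', hy₁, ?_⟩
  intro x hx
  have hxO₁' : x ∈ O₁ := hO'sub (hOsub hx)
  have h1 : dist (f (x, u)) (f (x₂, y₂)) < ε1 / 8 := by
    have := hclose x hx
    rwa [Metric.mem_ball] at this
  have h2 : dist (f (x, y₁)) (f (x₁, y₁)) < ε1 / 8 := hO₁small x hxO₁' x₁ hx₁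
  have h3 : dist (f (x₂, y₂)) (f (x₁, y₁)) ≤
      dist (f (x₂, y₂)) (f (x, u)) + dist (f (x, u)) (f (x, y₁)) +
        dist (f (x, y₁)) (f (x₁, y₁)) := dist_triangle4 _ _ _ _
  rw [dist_comm (f (x₂, y₂)) (f (x, u))] at h3
  linarith

/-! ### Existence of the enumeration and the maximal families -/

theorem exists_eOK (V : Set Y) (hV : IsOpen V)
    (hY : ∀ y : Y, CountablePiBase y) :
    ∃ e : Y → ℕ → Set Y, EOK V e := by
  have key : ∀ y, y ∈ V → ∃ g : ℕ → Set Y,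
      (∀ k, IsOpen (g k) ∧ (g k).Nonempty ∧ g k ⊆ V) ∧
      ∀ O : Set Y, IsOpen O → y ∈ O → ∃ k, g k ⊆ O ∩ V := by
    intro y hy
    obtain ⟨B, hBc, hBo, hBp⟩ := hY y
    have hBV : {M | M ∈ B ∧ M ⊆ V}.Countable := hBc.mono fun M hM => hM.1
    have hBVne : {M | M ∈ B ∧ M ⊆ V}.Nonempty := by
      obtain ⟨M, hM, hMV⟩ := hBp V (hV.mem_nhds hy)
      exact ⟨M, hM, hMV⟩
    obtain ⟨g, hg⟩ := hBV.exists_eq_range hBVne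
    refine ⟨g, fun k => ?_, fun O hO hyO => ?_⟩
    · have : g k ∈ {M | M ∈ B ∧ M ⊆ V} := hg ▸ mem_range_self k
      exact ⟨(hBo _ this.1).1, (hBo _ this.1).2, this.2⟩
    · obtain ⟨M, hM, hMsub⟩ := hBp (O ∩ V) ((hO.inter hV).mem_nhds ⟨hyO, hy⟩)
      have : M ∈ {M | M ∈ B ∧ M ⊆ V} := ⟨hM, hMsub.trans inter_subset_right⟩
      rw [hg] at this
      obtain ⟨k, hk⟩ := this
      exact ⟨k, hk ▸ hMsub⟩
  choose g hg1 hg2 using key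
  refine ⟨fun y => if h : y ∈ V then g y h else fun _ => V, fun y hy => ?_⟩
  simp only [dif_pos hy]
  exact ⟨hg1 y hy, hg2 y hy⟩

theorem exists_FamOK (f : X × Y → Z) (U : Set X) (V : Set Y) (ε1 : ℝ)
    (claim : ∀ U' V', IsOpen U' → U'.Nonempty → U' ⊆ U → IsOpen V' → V'.Nonempty → V' ⊆ V →
      ∃ O u w, IsOpen O ∧ O.Nonempty ∧ O ⊆ U' ∧ u ∈ V' ∧ w ∈ V' ∧
        ∀ x ∈ O, ε1 / 2 ≤ dist (f (x, u)) (f (x, w))) :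
    ∃ Fam : Set X → Set Y → Set (Set X × Y × Y), FamOK f U V (ε1 / 2) Fam := by
  have key : ∀ O M, (IsOpen O ∧ O.Nonempty ∧ O ⊆ U ∧ IsOpen M ∧ M.Nonempty ∧ M ⊆ V) →
      ∃ F : Set (Set X × Y × Y),
        (∀ t ∈ F, IsOpen t.1 ∧ t.1.Nonempty ∧ t.1 ⊆ O ∧ t.2.1 ∈ M ∧ t.2.2 ∈ M ∧
            ∀ x ∈ t.1, ε1 / 2 ≤ dist (f (x, t.2.1)) (f (x, t.2.2))) ∧
        (∀ t ∈ F, ∀ t' ∈ F, t ≠ t' → Disjoint t.1 t'.1) ∧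
        (∀ W, IsOpen W → W.Nonempty → W ⊆ O → ∃ t ∈ F, (W ∩ t.1).Nonempty) := by
    rintro O M ⟨hO, hOne, hOU, hM, hMne, hMV⟩
    set Good : Set X × Y × Y → Prop := fun t =>
      IsOpen t.1 ∧ t.1.Nonempty ∧ t.1 ⊆ O ∧ t.2.1 ∈ M ∧ t.2.2 ∈ M ∧
        ∀ x ∈ t.1, ε1 / 2 ≤ dist (f (x, t.2.1)) (f (x, t.2.2)) with hGood
    set S : Set (Set (Set X × Y × Y)) :=
      {F | (∀ t ∈ F, Good t) ∧ ∀ t ∈ F, ∀ t' ∈ F, t ≠ t' → Disjoint t.1 t'.1} with hS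
    obtain ⟨m, hm⟩ := zorn_subset S (by
      intro c hcS hchain
      refine ⟨⋃₀ c, ⟨?_, ?_⟩, fun s hs => subset_sUnion_of_mem hs⟩
      · rintro t ⟨F, hF, htF⟩
        exact (hcS hF).1 t htF
      · rintro t ⟨F, hF, htF⟩ t' ⟨F', hF', htF'⟩ hne
        rcases hchain.total hF hF' with hsub | hsub
        · exact (hcS hF').2 t (hsub htF) t' htF' hne
        · exact (hcS hF).2 t htF t' (hsub htF') hne)
    refine ⟨m, hm.1.1, hm.1.2, ?_⟩
    intro W hW hWne hWO
    by_contra hcon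
    push_neg at hcon
    have hWdisj : ∀ t ∈ m, W ∩ t.1 = ∅ := hcon
    obtain ⟨O'', u, w, hO'', hO''ne, hO''sub, huM, hwM, hsep⟩ :=
      claim W M hW hWne (hWO.trans hOU) hM hMne hMV
    have hnew : Good (O'', u, w) := ⟨hO'', hO''ne, hO''sub.trans hWO, huM, hwM, hsep⟩
    have hins : insert (O'', u, w) m ∈ S := by
      constructor
      · rintro t ht
        rcases ht with rfl | ht
        · exact hnew
        · exact hm.1.1 t ht
      · rintro t ht t' ht' hne
        rcases ht with rfl | ht <;> rcases ht' with rfl | ht'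
        · exact absurd rfl hne
        · refine disjoint_left.2 fun x hx hx' => ?_
          have hmem : x ∈ W ∩ t'.1 := ⟨hO''sub hx, hx'⟩
          rw [hWdisj t' ht'] at hmem
          exact hmem
        · refine disjoint_left.2 fun x hx hx' => ?_
          have hmem : x ∈ W ∩ t.1 := ⟨hO''sub hx', hx⟩
          rw [hWdisj t ht] at hmem
          exact hmem
        · exact hm.1.2 t ht t' ht' hne
    have hmem : (O'', u, w) ∈ m := hm.2 hins (subset_insert _ _) (mem_insert _ _)
    obtain ⟨x, hx⟩ := hO''ne
    have hcontra : x ∈ W ∩ O'' := ⟨hO''sub hx, hx⟩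
    rw [hWdisj _ hmem] at hcontra
    exact hcontra
  refine ⟨fun O M => if h : (IsOpen O ∧ O.Nonempty ∧ O ⊆ U ∧ IsOpen M ∧ M.Nonempty ∧ M ⊆ V)
    then (key O M h).choose else ∅, ?_⟩
  intro O M h1 h2 h3 h4 h5 h6
  have h : (IsOpen O ∧ O.Nonempty ∧ O ⊆ U ∧ IsOpen M ∧ M.Nonempty ∧ M ⊆ V) :=
    ⟨h1, h2, h3, h4, h5, h6⟩
  simp only [dif_pos h]
  exact (key O M h).choose_spec

/-! ### The master contradiction -/

theorem master [BaireSpace X] (f : X × Y → Z)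
    (hY : ∀ y : Y, CountablePiBase y)
    (hhqc : ∀ (a : X) (b : Y), HorizontallyQuasicontinuousAt f a b)
    (hclq : ∀ y : Y, Cliquish fun x : X => f (x, y))
    (hfrag : ∀ x : X, Fragmentable fun y : Y => f (x, y))
    (U : Set X) (V : Set Y) (b : Y) (ε1 : ℝ)
    (hU : IsOpen U) (hUne : U.Nonempty) (hV : IsOpen V) (hb : b ∈ V) (hε1 : 0 < ε1)
    (hneg : ∀ (U3 : Set X) (V3 : Set Y) (z₀ : Z), IsOpen U3 → U3.Nonempty → U3 ⊆ U →
      IsOpen V3 → V3.Nonempty → V3 ⊆ V →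
      ∃ O, IsOpen O ∧ O.Nonempty ∧ O ⊆ U3 ∧ ∀ x ∈ O, ∃ y ∈ V3, ε1 < dist (f (x, y)) z₀) :
    False := by
  have claim := claim_sep f U V ε1 hhqc hclq hε1 hneg
  obtain ⟨e, hE⟩ := exists_eOK V hV hY
  obtain ⟨Fam, hFam⟩ := exists_FamOK f U V ε1 claim
  -- the dense open sets
  set D : ℕ → Set X := fun n => ⋃ c ∈ levels Fam e b U n, c.1 with hD
  have hDopen : ∀ n, IsOpen (D n) := fun n =>
    isOpen_biUnion fun c hc => (levels_nodeOK hFam hE hU hUne hb n c hc).1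
  set E : ℕ → Set X := fun n => D n ∪ (closure U)ᶜ with hEdef
  have hEopen : ∀ n, IsOpen (E n) := fun n => (hDopen n).union isClosed_closure.isOpen_compl
  have hEdense : ∀ n, Dense (E n) := by
    intro n
    rw [dense_iff_inter_open]
    intro W hW hWne
    by_cases h : (W ∩ U).Nonempty
    · obtain ⟨c, hc, x, hx⟩ := levels_dense hFam hE hU hUne hb n W hW h
      exact ⟨x, hx.1, Or.inl (mem_biUnion hc hx.2)⟩
    · obtain ⟨x, hxW⟩ := hWne
      refine ⟨x, hxW, Or.inr ?_⟩
      intro hxcl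
      rw [mem_closure_iff] at hxcl
      exact h (hxcl W hW hxW)
  have hdense : Dense (⋂ n, E n) := dense_iInter_of_isOpen hEopen hEdense
  obtain ⟨x₀, hx₀U, hx₀E⟩ : ∃ x, x ∈ U ∧ x ∈ ⋂ n, E n := by
    obtain ⟨x, hx⟩ := hdense.inter_open_nonempty U hU hUne
    exact ⟨x, hx.1, hx.2⟩
  have hx₀D : ∀ n, x₀ ∈ D n := by
    intro n
    rcases mem_iInter.1 hx₀E n with h | h
    · exact h
    · exact absurd (subset_closure hx₀U) h
  -- the chain through x₀
  have exChild : ∀ n c, c ∈ levels Fam e b U n → x₀ ∈ c.1 →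
      ∃ d, d ∈ stepFun Fam e b n c ∧ d ∈ levels Fam e b U (n + 1) ∧ x₀ ∈ d.1 := by
    intro n c hc hxc
    obtain ⟨d, hd, hxd⟩ : ∃ d, d ∈ levels Fam e b U (n + 1) ∧ x₀ ∈ d.1 := by
      have h := hx₀D (n + 1)
      rw [hD] at h
      simpa using mem_iUnion₂.1 h
    have hd' := hd
    simp only [levels, mem_iUnion] at hd'
    obtain ⟨p, hp, hdp⟩ := hd'
    have hdsub := (step_sub hFam hE (levels_nodeOK hFam hE hU hUne hb n p hp) hdp).1
    by_cases hpc : p = c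
    · subst hpc
      exact ⟨d, hdp, hd, hxd⟩
    · exact absurd hxc
        (disjoint_left.1 (levels_disjoint hFam hE hU hUne hb n p hp c hc hpc) (hdsub hxd))
  obtain ⟨ch, hch0, hchmem, hchstep⟩ := exists_chain (levels Fam e b U) (stepFun Fam e b)
    (U, [b]) (fun c => x₀ ∈ c.1) ⟨rfl, hx₀U⟩ exChild
  have hNode : ∀ n, NodeOK U V (ch n) :=
    fun n => levels_nodeOK hFam hE hU hUne hb n _ (hchmem n).1
  have hsplit : ∀ n, ∃ r, (ch (n + 1)).2 = (ch n).2 ++ r :=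
    fun n => (step_sub hFam hE (hNode n) (hchstep n)).2.2.1
  have hprod : ∀ n, (sched n).1 < (ch n).2.length →
      ∃ t ∈ Fam (ch n).1 (e ((ch n).2.getD (sched n).1 b) (sched n).2),
        ch (n + 1) = (t.1, (ch n).2 ++ [t.2.1, t.2.2]) :=
    fun n => (step_sub hFam hE (hNode n) (hchstep n)).2.2.2
  have hext : ∀ n m, n ≤ m → ∃ r, (ch m).2 = (ch n).2 ++ r := by
    intro n m hnm
    induction m, hnm using Nat.le_induction with
    | base => exact ⟨[], by simp⟩
    | succ m hnm ih =>
      obtain ⟨r, hr⟩ := ih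
      obtain ⟨r', hr'⟩ := hsplit m
      exact ⟨r ++ r', by rw [hr', hr, List.append_assoc]⟩
  have hlen : ∀ n m, n ≤ m → (ch n).2.length ≤ (ch m).2.length := by
    intro n m hnm
    obtain ⟨r, hr⟩ := hext n m hnm
    rw [hr, List.length_append]
    omega
  have hgetD : ∀ n m, n ≤ m → ∀ i, i < (ch n).2.length →
      (ch m).2.getD i b = (ch n).2.getD i b := by
    intro n m hnm i hi
    obtain ⟨r, hr⟩ := hext n m hnm
    rw [hr]
    exact my_getD_append _ _ _ _ hi
  have hunb : ∀ J : ℕ, ∃ n, J ≤ (ch n).2.length := by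
    intro J
    induction J with
    | zero => exact ⟨0, Nat.zero_le _⟩
    | succ J ih =>
      obtain ⟨n, hn⟩ := ih
      obtain ⟨n', hn', hsched⟩ := sched_exists 0 0 n
      have hlen' : J ≤ (ch n').2.length := hn.trans (hlen n n' hn')
      have hpos : 0 < (ch n').2.length := List.length_pos_iff.2 (hNode n').2.2.2.1
      have h0 : (sched n').1 < (ch n').2.length := by rw [hsched]; exact hpos
      obtain ⟨t, ht, heq⟩ := hprod n' h0
      have h2 : (ch (n' + 1)).2 = (ch n').2 ++ [t.2.1, t.2.2] := by rw [heq]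
      refine ⟨n' + 1, ?_⟩
      rw [h2, List.length_append]
      simp only [List.length_cons, List.length_singleton]
      omega
  set S : Set Y := {y | ∃ n, y ∈ (ch n).2} with hSdef
  have hbS : b ∈ S := ⟨0, by rw [hch0]; simp⟩
  have hSV : S ⊆ V := by
    rintro y ⟨n, hy⟩
    exact (hNode n).2.2.2.2 y hy
  -- every scheduled requirement gets fulfilled at x₀
  have hreq : ∀ i k n₀, i < (ch n₀).2.length →
      ∃ u w, u ∈ S ∧ w ∈ S ∧ u ∈ e ((ch n₀).2.getD i b) k ∧ w ∈ e ((ch n₀).2.getD i b) k ∧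
        ε1 / 2 ≤ dist (f (x₀, u)) (f (x₀, w)) := by
    intro i k n₀ hi
    obtain ⟨n, hn₀n, hsched⟩ := sched_exists i k n₀
    have hI : (sched n).1 = i := by rw [hsched]
    have hK : (sched n).2 = k := by rw [hsched]
    have hi' : (sched n).1 < (ch n).2.length := by
      rw [hI]; exact lt_of_lt_of_le hi (hlen n₀ n hn₀n)
    obtain ⟨t, ht, heq⟩ := hprod n hi'
    rw [hI, hK, hgetD n₀ n hn₀n i hi] at ht
    set y' := (ch n₀).2.getD i b with hy'
    have hy'V : y' ∈ V := (hNode n₀).2.2.2.2 _ (my_getD_mem _ _ _ hi)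
    have hMp := (hE y' hy'V).1 k
    have hprops := (hFam (ch n).1 (e y' k) (hNode n).1 (hNode n).2.1 (hNode n).2.2.1
      hMp.1 hMp.2.1 hMp.2.2).1 t ht
    have hx₀t : x₀ ∈ t.1 := by
      have hx := (hchmem (n + 1)).2
      rw [heq] at hx
      exact hx
    refine ⟨t.2.1, t.2.2, ⟨n + 1, by rw [heq]; simp⟩, ⟨n + 1, by rw [heq]; simp⟩,
      hprops.2.2.2.1, hprops.2.2.2.2.1, hprops.2.2.2.2.2 x₀ hx₀t⟩
  -- the contradiction with fragmentability of f_{x₀}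
  obtain ⟨O, hO, hSOne, hOsub, hsmall⟩ := hfrag x₀ S ⟨b, hbS⟩ (ε1 / 2) (by linarith)
    univ isOpen_univ (by rw [inter_univ]; exact ⟨b, hbS⟩)
  obtain ⟨t, htS, htO⟩ := hSOne
  obtain ⟨n₀, htn₀⟩ := htS
  obtain ⟨i, hi, hgd⟩ := my_index_of_mem b htn₀
  have htV : t ∈ V := hSV ⟨n₀, htn₀⟩
  obtain ⟨k, hk⟩ := (hE t htV).2 O hO htO
  obtain ⟨u, w, huS, hwS, huM, hwM, hsep⟩ := hreq i k n₀ hi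
  rw [hgd] at huM hwM
  have huO : u ∈ O := (hk huM).1
  have hwO : w ∈ O := (hk hwM).1
  have hlt := hsmall u ⟨huS, huO⟩ w ⟨hwS, hwO⟩
  exact absurd hlt (not_lt.2 hsep)

end CliquishAux

theorem cliquish_of_horizontally_quasicontinuous {X Y Z : Type*} [TopologicalSpace X]
    [BaireSpace X] [TopologicalSpace Y] [MetricSpace Z] (f : X × Y → Z)
    (hY : ∀ y : Y, CountablePiBase y)
    (hhqc : ∀ (a : X) (b : Y), HorizontallyQuasicontinuousAt f a b)
    (hclq : ∀ y : Y, Cliquish fun x : X => f (x, y))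
    (hfrag : ∀ x : X, Fragmentable fun y : Y => f (x, y)) :
    Cliquish f := by
  intro ε hε G hG hGne
  obtain ⟨⟨a, b⟩, hab⟩ := hGne
  obtain ⟨U, V, hU, hV, ha, hb, hUV⟩ := isOpen_prod_iff.1 hG a b hab
  set ε1 : ℝ := ε / 5 with hε1def
  have hε1 : 0 < ε1 := by rw [hε1def]; linarith
  -- main goal: dense horizontal control
  have main : ∃ (U3 : Set X) (V3 : Set Y) (z₀ : Z), IsOpen U3 ∧ U3.Nonempty ∧ U3 ⊆ U ∧
      IsOpen V3 ∧ V3.Nonempty ∧ V3 ⊆ V ∧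
      ∀ O, IsOpen O → O.Nonempty → O ⊆ U3 → ∃ x' ∈ O, ∀ y ∈ V3, dist (f (x', y)) z₀ ≤ ε1 := by
    by_contra hmain
    push_neg at hmain
    refine CliquishAux.master f hY hhqc hclq hfrag U V b ε1 hU ⟨a, ha⟩ hV hb hε1 ?_
    intro U3 V3 z₀ h1 h2 h3 h4 h5 h6
    obtain ⟨O, hOopen, hOne, hOsub, hbad⟩ := hmain U3 V3 z₀ h1 h2 h3 h4 h5 h6
    exact ⟨O, hOopen, hOne, hOsub, hbad⟩
  obtain ⟨U3, V3, z₀, hU3, hU3ne, hU3U, hV3, hV3ne, hV3V, hdense⟩ := main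
  refine ⟨U3 ×ˢ V3, hU3.prod hV3, hU3ne.prod hV3ne,
    (prod_mono hU3U hV3V).trans hUV, ?_⟩
  have key : ∀ p ∈ U3 ×ˢ V3, dist (f p) z₀ < 2 * ε1 := by
    rintro ⟨x, y⟩ ⟨hx, hy⟩
    obtain ⟨O', hO', hO'ne, hO'sub, y'', hy'', hferr⟩ :=
      hhqc x y (Metric.ball (f (x, y)) ε1) (Metric.ball_mem_nhds _ hε1)
        U3 (hU3.mem_nhds hx) V3 (hV3.mem_nhds hy)
    obtain ⟨x', hx'O', hx'prop⟩ := hdense O' hO' hO'ne hO'sub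
    have h1 : dist (f (x', y'')) (f (x, y)) < ε1 := by
      have := hferr x' hx'O'
      rwa [Metric.mem_ball] at this
    have h2 : dist (f (x', y'')) z₀ ≤ ε1 := hx'prop y'' hy''
    calc dist (f (x, y)) z₀ ≤ dist (f (x, y)) (f (x', y'')) + dist (f (x', y'')) z₀ :=
          dist_triangle _ _ _
      _ < 2 * ε1 := by rw [dist_comm (f (x, y))]; linarith
  intro p hp q hq
  have h1 := key p hp
  have h2 := key q hq
  calc dist (f p) (f q) ≤ dist (f p) z₀ + dist z₀ (f q) := dist_triangle _ _ _
    _ < 2 * ε1 + 2 * ε1 := by rw [dist_comm z₀]; linarith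
    _ < ε := by rw [hε1def]; linarith
end

section
/- Let X be a Baire space, Y a topological space, (Z,d) a metric space, and f : X × Y → Z such that f_x : y ↦ f(x,y) is continuous for each x ∈ X and f^y : x ↦ f(x,y) is quasicontinuous for each y ∈ Y. Let b ∈ Y be a point having a countable π-base in Y, let V be a neighborhood of b, ε > 0, and U ⊆ X a nonempty open set. Then there is a nonempty open set O × W ⊆ U × V such that d(f(x,y), f(x,b)) ≤ ε for every (x,y) ∈ O × W. -/
open Set Topology

theorem local_uniform_approx {X Y Z : Type*} [TopologicalSpace X] [BaireSpace X]
    [TopologicalSpace Y] [MetricSpace Z] (f : X × Y → Z)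
    (hc : ∀ x : X, Continuous fun y : Y => f (x, y))
    (hqc : ∀ y : Y, Quasicontinuous' fun x : X => f (x, y))
    (b : Y) (hb : CountablePiBase b) (V : Set Y) (hV : V ∈ nhds b)
    (ε : ℝ) (hε : 0 < ε) (U : Set X) (hU : IsOpen U) (hUne : U.Nonempty) :
    ∃ O : Set X, ∃ W : Set Y, IsOpen O ∧ IsOpen W ∧ O.Nonempty ∧ W.Nonempty ∧
      O ⊆ U ∧ W ⊆ V ∧ ∀ x ∈ O, ∀ y ∈ W, dist (f (x, y)) (f (x, b)) ≤ ε := by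
  classical
  obtain ⟨B, hBc, hBon, hBbase⟩ := hb
  set B' : Set (Set Y) := {O ∈ B | O ⊆ V} with hB'def
  have hB'c : B'.Countable := hBc.mono (sep_subset _ _)
  have hB'ne : B'.Nonempty := by
    obtain ⟨O, hO, hOV⟩ := hBbase V hV
    exact ⟨O, hO, hOV⟩
  obtain ⟨W, hWrange⟩ := hB'c.exists_eq_range hB'ne
  have hWmem : ∀ n, W n ∈ B' := by
    intro n; rw [hWrange]; exact mem_range_self n
  have hWopen : ∀ n, IsOpen (W n) := fun n => (hBon _ (hWmem n).1).1
  have hWne : ∀ n, (W n).Nonempty := fun n => (hBon _ (hWmem n).1).2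
  have hWV : ∀ n, W n ⊆ V := fun n => (hWmem n).2
  set E : ℕ → Set X :=
    fun n => {x ∈ U | ∀ y ∈ W n, dist (f (x, y)) (f (x, b)) ≤ ε / 4} with hEdef
  -- the sets E n cover U
  have hcover : ∀ x ∈ U, ∃ n, x ∈ E n := by
    intro x hx
    have htend : Filter.Tendsto (fun y : Y => f (x, y)) (nhds b) (nhds (f (x, b))) :=
      (hc x).tendsto b
    have hev : ∀ᶠ y in nhds b, dist (f (x, y)) (f (x, b)) < ε / 4 :=
      Metric.tendsto_nhds.mp htend (ε / 4) (by linarith)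
    have hN : {y | dist (f (x, y)) (f (x, b)) ≤ ε / 4} ∈ nhds b :=
      hev.mono fun y hy => le_of_lt hy
    obtain ⟨O', hO'B, hO'sub⟩ := hBbase _ (Filter.inter_mem hN hV)
    have hO'B' : O' ∈ B' := ⟨hO'B, fun y hy => (hO'sub hy).2⟩
    rw [hWrange] at hO'B'
    obtain ⟨n, hn⟩ := hO'B'
    refine ⟨n, hx, fun y hy => ?_⟩
    rw [hn] at hy
    exact (hO'sub hy).1
  -- Baire: some E n is somewhere dense
  have hEn : ∃ n, (interior (closure (E n))).Nonempty := by
    by_contra h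
    push_neg at h
    have hdense : ∀ n, Dense (closure (E n))ᶜ := fun n =>
      interior_eq_empty_iff_dense_compl.mp (h n)
    have hD : Dense (⋂ n, (closure (E n))ᶜ) :=
      dense_iInter_of_isOpen (fun n => isClosed_closure.isOpen_compl) hdense
    obtain ⟨x, hxU, hxD⟩ := hD.inter_open_nonempty U hU hUne
    obtain ⟨n, hxE⟩ := hcover x hxU
    exact (mem_iInter.mp hxD n) (subset_closure hxE)
  obtain ⟨n, hGne⟩ := hEn
  set G : Set X := interior (closure (E n)) ∩ U with hGdef
  have hGopen : IsOpen G := isOpen_interior.inter hU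
  have hGclE : G ⊆ closure (E n) := fun x hx => interior_subset hx.1
  have hGU : G ⊆ U := fun x hx => hx.2
  -- any nonempty open subset of G meets E n
  have hmeet : ∀ O : Set X, IsOpen O → O.Nonempty → O ⊆ G → (O ∩ E n).Nonempty := by
    intro O hO ⟨x, hx⟩ hOG
    exact _root_.mem_closure_iff.mp (hGclE (hOG hx)) O hO hx
  -- G is nonempty
  have hGne' : G.Nonempty := by
    obtain ⟨x, hx⟩ := hGne
    have hxclU : x ∈ closure U := closure_mono (fun z hz => hz.1) (interior_subset hx)
    obtain ⟨y, hyI, hyU⟩ := _root_.mem_closure_iff.mp hxclU _ isOpen_interior hx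
    exact ⟨y, hyI, hyU⟩
  -- pick a point of E n in G
  obtain ⟨x₀, hx₀G, hx₀E⟩ := hmeet G hGopen hGne' (subset_refl _)
  -- apply quasicontinuity of f^b at x₀ inside G
  obtain ⟨O, hOopen, hOne, hOG, hOb⟩ :=
    hqc b (ε / 4) (by linarith) x₀ G (hGopen.mem_nhds hx₀G)
  refine ⟨O, W n, hOopen, hWopen n, hOne, hWne n, hOG.trans hGU, hWV n, ?_⟩
  intro x hxO y hyW
  -- apply quasicontinuity of f^y at x inside O
  obtain ⟨O₁, hO₁open, hO₁ne, hO₁O, hO₁y⟩ :=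
    hqc y (ε / 4) (by linarith) x O (hOopen.mem_nhds hxO)
  obtain ⟨x', hx'O₁, hx'E⟩ := hmeet O₁ hO₁open hO₁ne (hO₁O.trans hOG)
  have h1 : dist (f (x, y)) (f (x', y)) < ε / 4 := hO₁y x' hx'O₁
  have h2 : dist (f (x', y)) (f (x', b)) ≤ ε / 4 := hx'E.2 y hyW
  have h3 : dist (f (x₀, b)) (f (x', b)) < ε / 4 := hOb x' (hO₁O hx'O₁)
  have h4 : dist (f (x₀, b)) (f (x, b)) < ε / 4 := hOb x hxO
  have t1 : dist (f (x, y)) (f (x, b)) ≤ dist (f (x, y)) (f (x', y))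
      + dist (f (x', y)) (f (x', b)) + dist (f (x', b)) (f (x, b)) :=
    dist_triangle4 _ _ _ _
  have t2 : dist (f (x', b)) (f (x, b)) ≤ dist (f (x', b)) (f (x₀, b))
      + dist (f (x₀, b)) (f (x, b)) := dist_triangle _ _ _
  have h3' : dist (f (x', b)) (f (x₀, b)) < ε / 4 := by rw [dist_comm]; exact h3
  linarith
end

section
/- Let X be a Baire space, Y a topological space such that the set of points of Y having a countable π-base is dense in Y, (Z,d) a metric space, and f : X × Y → Z. If f_x : y ↦ f(x,y) is continuous for every x ∈ X and f^y : x ↦ f(x,y) is quasicontinuous for every y ∈ Y, then f is quasicontinuous on X × Y. -/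
open Set Topology

theorem quasicontinuous_of_separately {X Y Z : Type*} [TopologicalSpace X] [BaireSpace X]
    [TopologicalSpace Y] [MetricSpace Z] (f : X × Y → Z)
    (hY : Dense {y : Y | CountablePiBase y})
    (hc : ∀ x : X, Continuous fun y : Y => f (x, y))
    (hqc : ∀ y : Y, Quasicontinuous' fun x : X => f (x, y)) :
    Quasicontinuous' f := by
  rintro ε hε ⟨x₀, y₀⟩ W hW
  rw [nhds_prod_eq, Filter.mem_prod_iff] at hW
  obtain ⟨U', hU', V', hV', hUV⟩ := hW
  obtain ⟨U, hUsub, hUo, hxU⟩ := mem_nhds_iff.mp hU'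
  obtain ⟨V, hVsub, hVo, hyV⟩ := mem_nhds_iff.mp hV'
  -- the open set of points of V where f(x₀,·) is ε/4-close to f(x₀,y₀)
  set V'' : Set Y := V ∩ {y | dist (f (x₀, y)) (f (x₀, y₀)) < ε / 4} with hV''
  have hV''o : IsOpen V'' :=
    hVo.inter (isOpen_lt (Continuous.dist (hc x₀) continuous_const) continuous_const)
  have hy₀V'' : y₀ ∈ V'' := ⟨hyV, by simp only [mem_setOf_eq, dist_self]; positivity⟩
  -- pick y₁ ∈ V'' with a countable π-base
  obtain ⟨y₁, hy₁pb, hy₁V''⟩ := hY.exists_mem_open hV''o ⟨y₀, hy₀V''⟩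
  obtain ⟨B, hBcnt, hBprop, hBbase⟩ := hy₁pb
  -- restrict to members of B contained in V''
  have hV''nhds : V'' ∈ nhds y₁ := hV''o.mem_nhds hy₁V''
  have hB'cnt : {O | O ∈ B ∧ O ⊆ V''}.Countable := hBcnt.mono (fun O hO => hO.1)
  have hB'ne : {O | O ∈ B ∧ O ⊆ V''}.Nonempty := by
    obtain ⟨O, hOB, hOsub⟩ := hBbase V'' hV''nhds
    exact ⟨O, hOB, hOsub⟩
  obtain ⟨b, hb⟩ := hB'cnt.exists_eq_range hB'ne
  have hbmem : ∀ n, b n ∈ B ∧ b n ⊆ V'' := by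
    intro n
    have : b n ∈ {O | O ∈ B ∧ O ⊆ V''} := hb ▸ mem_range_self n
    exact this
  have hbbase : ∀ N ∈ nhds y₁, ∃ n, b n ⊆ N := by
    intro N hN
    obtain ⟨O, hOB, hOsub⟩ := hBbase (N ∩ V'') (Filter.inter_mem hN hV''nhds)
    have : O ∈ {O | O ∈ B ∧ O ⊆ V''} := ⟨hOB, fun y hy => (hOsub hy).2⟩
    rw [hb] at this
    obtain ⟨n, rfl⟩ := this
    exact ⟨n, fun y hy => (hOsub hy).1⟩
  -- quasicontinuity of f(·,y₁) at x₀ within U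
  obtain ⟨U₁, hU₁o, hU₁ne, hU₁sub, hU₁⟩ :=
    hqc y₁ (ε / 4) (by positivity) x₀ U (hUo.mem_nhds hxU)
  -- the sets Eₙ
  set E : ℕ → Set X :=
    fun n => {x | x ∈ U₁ ∧ ∀ y ∈ b n, dist (f (x, y)) (f (x₀, y₀)) < 3 * ε / 4} with hE
  have hcover : ∀ x ∈ U₁, ∃ n, x ∈ E n := by
    intro x hx
    have h1 : dist (f (x, y₁)) (f (x₀, y₀)) < ε / 2 := by
      have h2 : dist (f (x₀, y₁)) (f (x, y₁)) < ε / 4 := hU₁ x hx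
      have h3 : dist (f (x₀, y₁)) (f (x₀, y₀)) < ε / 4 := hy₁V''.2
      calc dist (f (x, y₁)) (f (x₀, y₀))
          ≤ dist (f (x, y₁)) (f (x₀, y₁)) + dist (f (x₀, y₁)) (f (x₀, y₀)) := dist_triangle _ _ _
        _ < ε / 4 + ε / 4 := by rw [dist_comm]; exact add_lt_add h2 h3
        _ = ε / 2 := by ring
    have hNopen : IsOpen {y | dist (f (x, y)) (f (x₀, y₀)) < 3 * ε / 4} :=
      isOpen_lt (Continuous.dist (hc x) continuous_const) continuous_const
    have hNmem : {y | dist (f (x, y)) (f (x₀, y₀)) < 3 * ε / 4} ∈ nhds y₁ :=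
      hNopen.mem_nhds (by simp only [mem_setOf_eq]; linarith)
    obtain ⟨n, hn⟩ := hbbase _ hNmem
    exact ⟨n, hx, fun y hy => hn hy⟩
  -- Baire category argument
  set F : ℕ → Set X := fun n => closure (E n) ∪ U₁ᶜ with hF
  have hFclosed : ∀ n, IsClosed (F n) := fun n => isClosed_closure.union hU₁o.isClosed_compl
  have hFunion : ⋃ n, F n = univ := by
    apply eq_univ_of_forall
    intro x
    by_cases hx : x ∈ U₁
    · obtain ⟨n, hn⟩ := hcover x hx
      exact mem_iUnion.mpr ⟨n, Or.inl (subset_closure hn)⟩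
    · exact mem_iUnion.mpr ⟨0, Or.inr hx⟩
  have hdense := dense_iUnion_interior_of_closed hFclosed hFunion
  obtain ⟨z, hz1, hz2⟩ := hdense.exists_mem_open hU₁o hU₁ne
  obtain ⟨n, hzn⟩ := mem_iUnion.mp hz1
  set G : Set X := U₁ ∩ interior (F n) with hG
  have hGo : IsOpen G := hU₁o.inter isOpen_interior
  have hGne : G.Nonempty := ⟨z, hz2, hzn⟩
  have hGsub : G ⊆ closure (E n) := by
    rintro x ⟨hx1, hx2⟩
    rcases interior_subset hx2 with h | h
    · exact h
    · exact absurd hx1 h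
  -- final estimate
  refine ⟨G ×ˢ b n, hGo.prod (hBprop _ (hbmem n).1).1,
    hGne.prod (hBprop _ (hbmem n).1).2, ?_, ?_⟩
  · intro p hp
    exact hUV ⟨hUsub (hU₁sub hp.1.1), hVsub ((hbmem n).2 hp.2).1⟩
  · rintro ⟨x, y⟩ ⟨hxG, hyb⟩
    obtain ⟨O', hO'o, hO'ne, hO'sub, hO'⟩ :=
      hqc y (ε / 8) (by positivity) x G (hGo.mem_nhds hxG)
    obtain ⟨x', hx'⟩ := hO'ne
    have hx'cl : x' ∈ closure (E n) := hGsub (hO'sub hx')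
    obtain ⟨x'', hx''O', hx''E⟩ := mem_closure_iff.mp hx'cl O' hO'o hx'
    have h1 : dist (f (x, y)) (f (x'', y)) < ε / 8 := hO' x'' hx''O'
    have h2 : dist (f (x'', y)) (f (x₀, y₀)) < 3 * ε / 4 := hx''E.2 y hyb
    calc dist (f (x₀, y₀)) (f (x, y))
        ≤ dist (f (x₀, y₀)) (f (x'', y)) + dist (f (x'', y)) (f (x, y)) := dist_triangle _ _ _
      _ < 3 * ε / 4 + ε / 8 := by
          rw [dist_comm] at h1 h2; exact add_lt_add h2 h1
      _ < ε := by linarith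
end

section
/- Let Y be a dense-in-itself metrizable space in which every separable subspace has empty interior, and let X = Σ(0) ⊆ 2^Y be the Σ-product {x ∈ 2^Y : {y : x(y) = 1} is countable} with the subspace topology from the product 2^Y. Then the evaluation map e : X × Y → {0,1}, e(x,y) = x(y), is continuous in x for each fixed y, cliquish in y for each fixed x, but e is not cliquish on X × Y. -/
open Set Topology

theorem evaluation_not_cliquish {Y : Type*} [TopologicalSpace Y]
    [TopologicalSpace.MetrizableSpace Y]
    (hY : ∀ y : Y, ¬ IsOpen ({y} : Set Y))
    (hsep : ∀ S : Set Y, TopologicalSpace.IsSeparable S → interior S = ∅)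
    [Nonempty Y] :
    (∀ y : Y, Continuous fun x : {x : Y → Bool // {y' : Y | x y' = true}.Countable} =>
        (if x.1 y then (1 : ℝ) else 0)) ∧
    (∀ x : {x : Y → Bool // {y' : Y | x y' = true}.Countable},
        Cliquish fun y : Y => (if x.1 y then (1 : ℝ) else 0)) ∧
    ¬ Cliquish (fun p : {x : Y → Bool // {y' : Y | x y' = true}.Countable} × Y =>
        (if p.1.1 p.2 then (1 : ℝ) else 0)) := by
  refine ⟨?_, ?_, ?_⟩
  · -- continuity in x for fixed y
    intro y
    have h1 : Continuous fun x : {x : Y → Bool // {y' : Y | x y' = true}.Countable} => x.1 y :=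
      (continuous_apply y).comp continuous_subtype_val
    exact (continuous_of_discreteTopology (f := fun b : Bool => if b then (1 : ℝ) else 0)).comp h1
  · -- cliquish in y for fixed x
    intro x ε hε U hU hUne
    set S : Set Y := {y' : Y | x.1 y' = true} with hSdef
    have hsepS : TopologicalSpace.IsSeparable (closure S) := x.2.isSeparable.closure
    have hint : interior (closure S) = ∅ := hsep _ hsepS
    refine ⟨U \ closure S, hU.sdiff isClosed_closure, ?_, diff_subset, ?_⟩
    · by_contra h
      rw [not_nonempty_iff_eq_empty, diff_eq_empty] at h
      have : U ⊆ interior (closure S) := hU.subset_interior_iff.mpr h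
      rw [hint, subset_empty_iff] at this
      exact hUne.ne_empty this
    · intro a ha b hb
      have ha' : x.1 a = false := by
        by_contra h
        exact ha.2 (subset_closure (by simpa [hSdef] using h))
      have hb' : x.1 b = false := by
        by_contra h
        exact hb.2 (subset_closure (by simpa [hSdef] using h))
      simp [ha', hb', hε]
  · -- not cliquish
    classical
    intro hcl
    have hXne : Nonempty {x : Y → Bool // {y' : Y | x y' = true}.Countable} :=
      ⟨⟨fun _ => false, by simp⟩⟩
    obtain ⟨O, hO, hOne, -, hosc⟩ := hcl (1/2) (by norm_num) univ isOpen_univ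
      ⟨⟨Classical.arbitrary _, Classical.arbitrary Y⟩, trivial⟩
    obtain ⟨⟨x₀, y₀⟩, hp⟩ := hOne
    have hmem : O ∈ 𝓝 (x₀, y₀) := hO.mem_nhds hp
    rw [nhds_prod_eq, Filter.mem_prod_iff] at hmem
    obtain ⟨W, hW, V, hV, hWV⟩ := hmem
    rw [nhds_subtype_eq_comap, Filter.mem_comap] at hW
    obtain ⟨W', hW', hW'sub⟩ := hW
    rw [nhds_pi, Filter.mem_pi] at hW'
    obtain ⟨I, hIfin, t, ht, htsub⟩ := hW'
    obtain ⟨V', hV'sub, hV'open, hy₀⟩ := mem_nhds_iff.mp hV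
    -- pick y₁ ∈ V' \ I
    have hVI : (V' \ I).Nonempty := by
      by_contra h
      rw [not_nonempty_iff_eq_empty, diff_eq_empty] at h
      have hIint : interior I = ∅ := hsep I hIfin.countable.isSeparable
      have : V' ⊆ interior I := hV'open.subset_interior_iff.mpr h
      rw [hIint, subset_empty_iff] at this
      exact (this ▸ hy₀ : y₀ ∈ (∅ : Set Y))
    obtain ⟨y₁, hy₁V, hy₁I⟩ := hVI
    -- define x₁ by flipping x₀ at y₁
    set g : Y → Bool := Function.update x₀.1 y₁ (!(x₀.1 y₁)) with hg
    have hgcount : {y' : Y | g y' = true}.Countable := by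
      apply Set.Countable.mono _ ((x₀.2).insert y₁)
      intro y hy
      rcases eq_or_ne y y₁ with rfl | hne
      · exact mem_insert _ _
      · right
        simpa [hg, Function.update_of_ne hne] using hy
    set x₁ : {x : Y → Bool // {y' : Y | x y' = true}.Countable} := ⟨g, hgcount⟩ with hx₁
    have hx₁W : x₁ ∈ W := by
      apply hW'sub
      apply htsub
      intro y hyI
      have hne : y ≠ y₁ := fun h => hy₁I (h ▸ hyI)
      have : g y = x₀.1 y := Function.update_of_ne hne _ _
      rw [hx₁]
      simpa [this] using mem_of_mem_nhds (ht y)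
    have hx₀W : x₀ ∈ W :=
      hW'sub (htsub fun y _ => mem_of_mem_nhds (ht y))
    have h0 : (x₀, y₁) ∈ O := hWV ⟨hx₀W, hV'sub hy₁V⟩
    have h1 : (x₁, y₁) ∈ O := hWV ⟨hx₁W, hV'sub hy₁V⟩
    have := hosc _ h0 _ h1
    have hval : g y₁ = !(x₀.1 y₁) := Function.update_self _ _ _
    rcases Bool.eq_false_or_eq_true (x₀.1 y₁) with h | h <;>
      simp [h, hx₁, hval, Real.dist_eq] at this <;> norm_num at this
end

section
/- Let X be a Baire space, Y a topological space, (Z,d) a metric space, and let y ∈ Y have a countable network N consisting of somewhere dense subsets of Y. Let f : X × Y → Z be such that the section f_x is continuous at y for every x in a nonmeager subset R ⊆ X. Then for every ε > 0 and every neighborhood V of y there exist a nonempty open set U ⊆ X and a set L ∈ N with L ⊆ V such that for every b ∈ L the set {x ∈ U : d(f(x,b), f(x,y)) < ε} is dense in U. -/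
open Set Topology

theorem remark_countable_network {X Y Z : Type*} [TopologicalSpace X] [BaireSpace X]
    [TopologicalSpace Y] [MetricSpace Z] (f : X × Y → Z) (y : Y)
    (𝒩 : Set (Set Y)) (hcount : 𝒩.Countable)
    (hsd : ∀ N ∈ 𝒩, (interior (closure N)).Nonempty)
    (hnet : ∀ U ∈ nhds y, ∃ N ∈ 𝒩, N.Nonempty ∧ N ⊆ U)
    (R : Set X) (hR : ¬ IsMeagre R)
    (hcont : ∀ x ∈ R, ContinuousAt (fun y' : Y => f (x, y')) y)
    (ε : ℝ) (hε : 0 < ε) (V : Set Y) (hV : V ∈ nhds y) :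
    ∃ U : Set X, IsOpen U ∧ U.Nonempty ∧ ∃ L ∈ 𝒩, L ⊆ V ∧
      ∀ b ∈ L, U ⊆ closure {x : X | x ∈ U ∧ dist (f (x, b)) (f (x, y)) < ε} := by
  classical
  set E : Set Y → Set X := fun N => {x | ∀ b ∈ N, dist (f (x, b)) (f (x, y)) ≤ ε / 2}
    with hE
  set 𝒩' : Set (Set Y) := {N ∈ 𝒩 | N ⊆ V} with h𝒩'
  -- R is covered by the sets E N, N ∈ 𝒩'
  have hcover : R ⊆ ⋃₀ (E '' 𝒩') := by
    intro x hx
    have hpre : (fun y' : Y => f (x, y')) ⁻¹' Metric.closedBall (f (x, y)) (ε / 2)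
        ∈ nhds y :=
      (hcont x hx) (Metric.closedBall_mem_nhds _ (by positivity))
    obtain ⟨N, hN𝒩, hNne, hNsub⟩ := hnet _ (Filter.inter_mem hpre hV)
    refine ⟨E N, ⟨N, ⟨hN𝒩, fun b hb => (hNsub hb).2⟩, rfl⟩, ?_⟩
    intro b hb
    have := (hNsub hb).1
    simpa [Metric.mem_closedBall] using this
  -- some E N is not nowhere dense
  have hkey : ∃ N ∈ 𝒩', (interior (closure (E N))).Nonempty := by
    by_contra hcon
    push_neg at hcon
    apply hR
    rw [isMeagre_iff_countable_union_isNowhereDense]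
    refine ⟨E '' 𝒩', ?_, (hcount.mono (sep_subset _ _)).image _, hcover⟩
    rintro t ⟨N, hN, rfl⟩
    exact hcon N hN
  obtain ⟨N, ⟨hN𝒩, hNV⟩, hNint⟩ := hkey
  refine ⟨interior (closure (E N)), isOpen_interior, hNint, N, hN𝒩, hNV, ?_⟩
  intro b hb x hx
  have h1 : interior (closure (E N)) ∩ closure (E N) ⊆
      closure (interior (closure (E N)) ∩ E N) :=
    isOpen_interior.inter_closure
  have h2 : x ∈ closure (interior (closure (E N)) ∩ E N) :=
    h1 ⟨hx, interior_subset hx⟩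
  refine closure_mono ?_ h2
  rintro z ⟨hz1, hz2⟩
  exact ⟨hz1, lt_of_le_of_lt (hz2 b hb) (by linarith)⟩
end
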